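/- arXiv:1401.3583 — 3 statements merged into one kernel-verified Lean document; each statement's English description precedes it below -/
import Mathlib

section
/- Fix 0 < a < b, β > 0, M > 0, H ∈ (0,1) and c_H > 0. For N, k ∈ ℕ set I_k^N = [k·2^{−N/H}, (k+1)·2^{−N/H}]. Suppose there exists N₁ ∈ ℕ such that for all z ∈ [−M, M]ⁿ, all ε > 0, all N ≥ N₁ and all k with I_k^N ⊆ [a, b], one has ℙ( {ω : ∃ t ∈ I_k^N, |u_t(ω) − z| < ε} ) ≤ c_H · ε^β, where |·| is the Euclidean norm on ℝⁿ. Then there exists a constant C > 0 (depending on a, b, β, M, H, n) such that for every Borel set A ⊆ [−M, M]ⁿ, ℙ( {ω : ∃ t ∈ [a,b], u_t(ω) ∈ A} ) ≤ C · ℋ_{β − 1/H}(A). -/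
open MeasureTheory Set ENNReal NNReal

section helpers

variable {H : ℝ}

private lemma grid_pos (H : ℝ) (N : ℕ) : 0 < (2:ℝ) ^ (-(N : ℝ) / H) :=
  Real.rpow_pos_of_pos two_pos _

private lemma grid_anti (hH0 : 0 < H) {N N' : ℕ} (h : N ≤ N') :
    (2:ℝ) ^ (-(N' : ℝ) / H) ≤ (2:ℝ) ^ (-(N : ℝ) / H) := by
  apply Real.rpow_le_rpow_of_exponent_le one_le_two
  have : (N : ℝ) ≤ (N' : ℝ) := by exact_mod_cast h
  exact (div_le_div_iff_of_pos_right hH0).mpr (neg_le_neg this)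

private lemma grid_small (hH0 : 0 < H) {c : ℝ} (hc : 0 < c) :
    ∃ N : ℕ, (2:ℝ) ^ (-(N : ℝ) / H) < c := by
  have hr1 : (2:ℝ) ^ (-(1:ℝ)/H) < 1 :=
    Real.rpow_lt_one_of_one_lt_of_neg one_lt_two (div_neg_of_neg_of_pos (by norm_num) hH0)
  obtain ⟨N, hN⟩ := exists_pow_lt_of_lt_one hc hr1
  refine ⟨N, ?_⟩
  have : ((2:ℝ) ^ (-(1:ℝ)/H)) ^ N = (2:ℝ) ^ (-(N:ℝ)/H) := by
    rw [← Real.rpow_natCast ((2:ℝ) ^ (-(1:ℝ)/H)) N, ← Real.rpow_mul (by norm_num)]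
    congr 1
    ring
  linarith [this ▸ hN]

private lemma grid_half (hH0 : 0 < H) (hH1 : H < 1) (N : ℕ) :
    2 * (2:ℝ) ^ (-((N+1 : ℕ) : ℝ) / H) ≤ (2:ℝ) ^ (-(N : ℝ) / H) := by
  have h1H : 1 ≤ 1 / H := one_le_one_div hH0 hH1.le
  have : 2 * (2:ℝ) ^ (-((N+1 : ℕ) : ℝ) / H) = (2:ℝ) ^ (1 + -((N+1 : ℕ) : ℝ) / H) := by
    rw [Real.rpow_add two_pos, Real.rpow_one]
  rw [this]
  apply Real.rpow_le_rpow_of_exponent_le one_le_two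
  push_cast
  have : -((N:ℝ)+1)/H = -(N:ℝ)/H - 1/H := by ring
  rw [this]
  linarith

end helpers

section main

variable {Ω : Type*} [MeasurableSpace Ω]

private lemma window_ball (ℙ : Measure Ω) [IsProbabilityMeasure ℙ]
    {n : ℕ} (u : ℝ → Ω → EuclideanSpace ℝ (Fin n))
    {a b β M H cH : ℝ}
    (ha : 0 < a) (hab : a < b) (hβ : 0 < β)
    (hH0 : 0 < H) (hH1 : H < 1) (hcH : 0 < cH)
    (N₁ : ℕ)
    (hyp : ∀ z : EuclideanSpace ℝ (Fin n), (∀ i, |z i| ≤ M) →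
      ∀ ε : ℝ, 0 < ε → ∀ N : ℕ, N₁ ≤ N → ∀ k : ℕ,
        Set.Icc ((k : ℝ) * 2 ^ (-(N : ℝ) / H)) (((k : ℝ) + 1) * 2 ^ (-(N : ℝ) / H))
            ⊆ Set.Icc a b →
        ℙ {ω | ∃ t ∈ Set.Icc ((k : ℝ) * 2 ^ (-(N : ℝ) / H))
                (((k : ℝ) + 1) * 2 ^ (-(N : ℝ) / H)), ‖u t ω - z‖ < ε}
          ≤ ENNReal.ofReal (cH * ε ^ β))
    (z : EuclideanSpace ℝ (Fin n)) (hz : ∀ i, |z i| ≤ M)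
    (N' : ℕ) {ε : ℝ} (hε : 0 < ε)
    (hε1 : ε ≤ (2:ℝ) ^ (-(N₁ : ℝ))) (hε2 : ε ≤ (2:ℝ) ^ (-(N' : ℝ))) :
    ℙ {ω | ∃ t ∈ Set.Icc (a + (2:ℝ) ^ (-(N' : ℝ) / H)) (b - (2:ℝ) ^ (-(N' : ℝ) / H)),
        ‖u t ω - z‖ ≤ ε}
      ≤ ENNReal.ofReal ((b+1) * (cH * 2 ^ β) * ε ^ (β - 1/H)) := by
  classical
  set Ns : ℕ := max N₁ N' with hNs
  set δ : ℝ := (2:ℝ) ^ (-(Ns : ℝ) / H) with hδdef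
  have hδpos : 0 < δ := grid_pos H Ns
  have hδN' : δ ≤ (2:ℝ) ^ (-(N' : ℝ) / H) := grid_anti hH0 (le_max_right _ _)
  have hb : 0 < b := ha.trans hab
  have hε1' : ε ≤ 1 := by
    refine hε1.trans (Real.rpow_le_one_of_one_le_of_nonpos one_le_two ?_)
    simp
  have hεNs : ε ≤ (2:ℝ) ^ (-(Ns : ℝ)) := by
    rcases max_choice N₁ N' with h | h <;> rw [hNs, h] <;> assumption
  have hδlb : ε ^ (1/H) ≤ δ := by
    have h1 : ε ^ (1/H) ≤ ((2:ℝ) ^ (-(Ns:ℝ))) ^ (1/H) :=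
      Real.rpow_le_rpow hε.le hεNs (by positivity)
    have h2 : ((2:ℝ) ^ (-(Ns:ℝ))) ^ (1/H) = δ := by
      rw [hδdef, ← Real.rpow_mul (by norm_num)]
      congr 1
      ring
    linarith
  set K : ℕ := ⌊b / δ⌋₊ with hK
  set T : ℕ → Set Ω := fun k =>
    if Set.Icc ((k : ℝ) * δ) (((k : ℝ) + 1) * δ) ⊆ Set.Icc a b then
      {ω | ∃ t ∈ Set.Icc ((k : ℝ) * δ) (((k : ℝ) + 1) * δ), ‖u t ω - z‖ < 2*ε}
    else ∅ with hT
  -- coverage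
  have hcover : {ω | ∃ t ∈ Set.Icc (a + (2:ℝ) ^ (-(N' : ℝ) / H)) (b - (2:ℝ) ^ (-(N' : ℝ) / H)),
        ‖u t ω - z‖ ≤ ε} ⊆ ⋃ k ∈ Finset.range (K+1), T k := by
    rintro ω ⟨t, ⟨ht1, ht2⟩, hnorm⟩
    have hta : a + δ ≤ t := le_trans (by linarith) ht1
    have htb : t ≤ b - δ := le_trans ht2 (by linarith)
    have htpos : 0 ≤ t / δ := le_of_lt (div_pos (by linarith) hδpos)
    set k : ℕ := ⌊t / δ⌋₊ with hk
    have hk1 : (k:ℝ) * δ ≤ t := by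
      rw [hk]
      have := Nat.floor_le htpos
      calc (⌊t/δ⌋₊ : ℝ) * δ ≤ (t/δ) * δ := by
            exact mul_le_mul_of_nonneg_right this hδpos.le
        _ = t := by field_simp
    have hk2 : t < ((k:ℝ) + 1) * δ := by
      have := Nat.lt_floor_add_one (t/δ)
      calc t = (t/δ) * δ := by field_simp
        _ < ((k:ℝ)+1) * δ := by
            apply mul_lt_mul_of_pos_right _ hδpos
            exact_mod_cast this
    have hsub : Set.Icc ((k : ℝ) * δ) (((k : ℝ) + 1) * δ) ⊆ Set.Icc a b := by
      apply Set.Icc_subset_Icc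
      · nlinarith
      · nlinarith
    have hkK : k ∈ Finset.range (K+1) := by
      rw [Finset.mem_range, Nat.lt_succ_iff, hk, hK]
      exact Nat.floor_mono (by gcongr; linarith)
    refine Set.mem_biUnion hkK ?_
    rw [hT]
    simp only [if_pos hsub]
    exact ⟨t, ⟨hk1, hk2.le⟩, lt_of_le_of_lt hnorm (by linarith)⟩
  have hTk : ∀ k, ℙ (T k) ≤ ENNReal.ofReal (cH * (2*ε) ^ β) := by
    intro k
    rw [hT]
    by_cases hsub : Set.Icc ((k : ℝ) * δ) (((k : ℝ) + 1) * δ) ⊆ Set.Icc a b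
    · simp only [if_pos hsub]
      exact hyp z hz (2*ε) (by linarith) Ns (le_max_left _ _) k hsub
    · simp only [if_neg hsub, measure_empty]
      exact zero_le
  calc ℙ _ ≤ ℙ (⋃ k ∈ Finset.range (K+1), T k) := measure_mono hcover
    _ ≤ ∑ k ∈ Finset.range (K+1), ℙ (T k) := measure_biUnion_finset_le _ _
    _ ≤ ∑ _k ∈ Finset.range (K+1), ENNReal.ofReal (cH * (2*ε) ^ β) :=
        Finset.sum_le_sum fun k _ => hTk k
    _ = ((K+1 : ℕ) : ℝ≥0∞) * ENNReal.ofReal (cH * (2*ε) ^ β) := by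
        rw [Finset.sum_const, Finset.card_range, nsmul_eq_mul]
    _ ≤ ENNReal.ofReal ((b+1) * (cH * 2 ^ β) * ε ^ (β - 1/H)) := by
        rw [← ENNReal.ofReal_natCast (K+1), ← ENNReal.ofReal_mul (by positivity)]
        apply ENNReal.ofReal_le_ofReal
        have hεH : (0:ℝ) < ε ^ (1/H) := by positivity
        have hKb : ((K+1:ℕ):ℝ) ≤ b/δ + 1 := by
          push_cast
          have := Nat.floor_le (show (0:ℝ) ≤ b/δ by positivity)
          linarith
        have hbδ : b / δ ≤ b * ε ^ (-(1/H)) := by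
          rw [Real.rpow_neg hε.le, div_eq_mul_inv]
          exact mul_le_mul_of_nonneg_left (by
            apply inv_anti₀ hεH hδlb) hb.le
        have h2εβ : (2*ε)^β = 2^β * ε^β := Real.mul_rpow (by norm_num) hε.le
        have hεβd : ε^β ≤ ε^(β-1/H) := by
          apply Real.rpow_le_rpow_of_exponent_ge hε hε1'
          have : 0 < 1/H := by positivity
          linarith
        have hkey : ε^(-(1/H)) * ε^β = ε^(β-1/H) := by
          rw [← Real.rpow_add hε]
          congr 1
          ring
        have hcH2 : (0:ℝ) ≤ cH * 2^β := by positivity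
        calc ((K+1:ℕ):ℝ) * (cH*(2*ε)^β)
            ≤ (b * ε^(-(1/H)) + 1) * (cH*(2*ε)^β) := by
              apply mul_le_mul_of_nonneg_right _ (by positivity)
              linarith
          _ = b*(cH*2^β)*(ε^(-(1/H)) * ε^β) + (cH*2^β)*ε^β := by rw [h2εβ]; ring
          _ = b*(cH*2^β)*ε^(β-1/H) + (cH*2^β)*ε^β := by rw [hkey]
          _ ≤ b*(cH*2^β)*ε^(β-1/H) + (cH*2^β)*ε^(β-1/H) := by
              have := mul_le_mul_of_nonneg_left hεβd hcH2
              linarith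
          _ = (b+1) * (cH * 2 ^ β) * ε ^ (β - 1/H) := by ring

private lemma point_ball (ℙ : Measure Ω) [IsProbabilityMeasure ℙ]
    {n : ℕ} (u : ℝ → Ω → EuclideanSpace ℝ (Fin n))
    (hu_cont : ∀ ω, ContinuousOn (fun t => u t ω) (Set.Ici (0 : ℝ)))
    {a b β M H cH : ℝ}
    (ha : 0 < a) (hab : a < b) (hβ : 0 < β)
    (hH0 : 0 < H) (hH1 : H < 1) (hcH : 0 < cH)
    (N₁ : ℕ)
    (hyp : ∀ z : EuclideanSpace ℝ (Fin n), (∀ i, |z i| ≤ M) →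
      ∀ ε : ℝ, 0 < ε → ∀ N : ℕ, N₁ ≤ N → ∀ k : ℕ,
        Set.Icc ((k : ℝ) * 2 ^ (-(N : ℝ) / H)) (((k : ℝ) + 1) * 2 ^ (-(N : ℝ) / H))
            ⊆ Set.Icc a b →
        ℙ {ω | ∃ t ∈ Set.Icc ((k : ℝ) * 2 ^ (-(N : ℝ) / H))
                (((k : ℝ) + 1) * 2 ^ (-(N : ℝ) / H)), ‖u t ω - z‖ < ε}
          ≤ ENNReal.ofReal (cH * ε ^ β))
    (z : EuclideanSpace ℝ (Fin n)) (hz : ∀ i, |z i| ≤ M)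
    {ε : ℝ} (hε : 0 < ε) (t₀ : ℝ) (ht₀ : t₀ = a ∨ t₀ = b) :
    ℙ {ω | ‖u t₀ ω - z‖ ≤ ε} ≤ ENNReal.ofReal (cH * (2*ε) ^ β) := by
  classical
  have hb : 0 < b := ha.trans hab
  have ht₀pos : 0 < t₀ := by rcases ht₀ with h | h <;> rw [h] <;> [exact ha; exact hb]
  obtain ⟨N₀, hN₀⟩ := grid_small hH0 (show (0:ℝ) < (b-a)/2 by linarith)
  set N₂ : ℕ := max N₁ N₀ with hN₂def
  have hN₂ : (2:ℝ) ^ (-(N₂:ℝ)/H) ≤ (b-a)/2 :=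
    le_trans (grid_anti hH0 (le_max_right _ _)) hN₀.le
  have hN₂1 : N₁ ≤ N₂ := le_max_left _ _
  -- the monotone family of "stay" events
  set G : ℕ → Set Ω := fun m =>
    {ω | ∀ s ∈ Set.Icc (t₀ - (2:ℝ)^(-((N₂+m:ℕ):ℝ)/H)) (t₀ + (2:ℝ)^(-((N₂+m:ℕ):ℝ)/H)),
      0 ≤ s → ‖u s ω - z‖ < 2*ε} with hG
  have hGmono : Monotone G := by
    intro m m' hmm' ω hω s hs hs0
    apply hω s _ hs0
    have hd : (2:ℝ)^(-((N₂+m':ℕ):ℝ)/H) ≤ (2:ℝ)^(-((N₂+m:ℕ):ℝ)/H) :=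
      grid_anti hH0 (by omega)
    exact ⟨by linarith [hs.1], by linarith [hs.2]⟩
  -- the event is inside the union of the G m
  have hsub : {ω | ‖u t₀ ω - z‖ ≤ ε} ⊆ ⋃ m, G m := by
    intro ω hω
    have hc : ContinuousWithinAt (fun t => u t ω) (Set.Ici (0:ℝ)) t₀ :=
      (hu_cont ω) t₀ (le_of_lt ht₀pos)
    have hmem : {x : EuclideanSpace ℝ (Fin n) | ‖x - z‖ < 2*ε} ∈
        nhds (u t₀ ω) := by
      have : ‖u t₀ ω - z‖ < 2*ε := lt_of_le_of_lt hω (by linarith)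
      have hopen : IsOpen {x : EuclideanSpace ℝ (Fin n) | ‖x - z‖ < 2*ε} := by
        have : {x : EuclideanSpace ℝ (Fin n) | ‖x - z‖ < 2*ε} =
            Metric.ball z (2*ε) := by
          ext x
          simp [Metric.mem_ball, dist_eq_norm]
        rw [this]
        exact Metric.isOpen_ball
      exact hopen.mem_nhds this
    have hpre : (fun t => u t ω) ⁻¹' {x | ‖x - z‖ < 2*ε} ∈ nhdsWithin t₀ (Set.Ici 0) :=
      hc hmem
    rw [Metric.mem_nhdsWithin_iff] at hpre
    obtain ⟨η, hη, hball⟩ := hpre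
    obtain ⟨m, hm⟩ := grid_small hH0 hη
    refine Set.mem_iUnion.mpr ⟨m, ?_⟩
    intro s hs hs0
    have hds : (2:ℝ)^(-((N₂+m:ℕ):ℝ)/H) ≤ (2:ℝ)^(-(m:ℝ)/H) :=
      grid_anti hH0 (by omega)
    have : s ∈ Metric.ball t₀ η ∩ Set.Ici (0:ℝ) := by
      constructor
      · rw [Metric.mem_ball, Real.dist_eq]
        rw [abs_lt]
        constructor <;> [linarith [hs.1]; linarith [hs.2]]
      · exact hs0
    exact hball this
  -- each G m is contained in a grid event
  have hGbound : ∀ m, ℙ (G m) ≤ ENNReal.ofReal (cH * (2*ε) ^ β) := by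
    intro m
    set N : ℕ := N₂ + m + 1 with hNdef
    set δ : ℝ := (2:ℝ)^(-(N:ℝ)/H) with hδdef
    have hδpos : 0 < δ := grid_pos H N
    have hδm : 2*δ ≤ (2:ℝ)^(-((N₂+m:ℕ):ℝ)/H) := by
      rw [hδdef, hNdef]
      exact grid_half hH0 hH1 (N₂+m)
    have hδN₂ : δ ≤ (2:ℝ)^(-(N₂:ℝ)/H) := grid_anti hH0 (by omega)
    have hδsmall : 2*δ ≤ (b-a)/2 := le_trans hδm (le_trans (grid_anti hH0 (by omega)) hN₂)
    have hwpos : (0:ℝ) < (2:ℝ)^(-((N₂+m:ℕ):ℝ)/H) := grid_pos H _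
    -- choose the grid interval
    obtain ⟨k, hk0, hkab, hkw⟩ : ∃ k : ℕ, 0 ≤ (k:ℝ)*δ ∧
        Set.Icc ((k:ℝ)*δ) (((k:ℝ)+1)*δ) ⊆ Set.Icc a b ∧
        Set.Icc ((k:ℝ)*δ) (((k:ℝ)+1)*δ) ⊆
          Set.Icc (t₀ - (2:ℝ)^(-((N₂+m:ℕ):ℝ)/H)) (t₀ + (2:ℝ)^(-((N₂+m:ℕ):ℝ)/H)) := by
      rcases ht₀ with h | h
      · -- t₀ = a
        set k : ℕ := ⌈a/δ⌉₊ with hkdef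
        have hexp : ((k:ℝ)+1)*δ = (k:ℝ)*δ + δ := by ring
        have h1 : a ≤ (k:ℝ)*δ := by
          rw [← div_le_iff₀ hδpos]
          exact Nat.le_ceil _
        have h2 : (k:ℝ)*δ < a + δ := by
          have hc := Nat.ceil_lt_add_one (show (0:ℝ) ≤ a/δ by positivity)
          have : (⌈a/δ⌉₊:ℝ)*δ < (a/δ + 1)*δ := mul_lt_mul_of_pos_right hc hδpos
          have heq : (a/δ + 1)*δ = a + δ := by field_simp
          rw [hkdef]
          linarith
        refine ⟨k, by linarith, ?_, ?_⟩
        · exact Set.Icc_subset_Icc (by linarith) (by rw [hexp]; linarith)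
        · rw [h]
          exact Set.Icc_subset_Icc (by linarith) (by rw [hexp]; linarith)
      · -- t₀ = b
        have hδb : 1 ≤ b/δ := by
          rw [le_div_iff₀ hδpos]
          linarith
        have hfl1 : 1 ≤ ⌊b/δ⌋₊ := by
          rw [Nat.one_le_iff_ne_zero, ← Nat.pos_iff_ne_zero]
          exact Nat.floor_pos.mpr hδb
        set k : ℕ := ⌊b/δ⌋₊ - 1 with hkdef
        have hexp : ((k:ℝ)+1)*δ = (k:ℝ)*δ + δ := by ring
        have hkcast : ((k:ℕ):ℝ) = (⌊b/δ⌋₊:ℝ) - 1 := by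
          rw [hkdef]
          push_cast [Nat.cast_sub hfl1]
          ring
        have hfl : (⌊b/δ⌋₊:ℝ) ≤ b/δ := Nat.floor_le (by positivity)
        have hfl2 : b/δ - 1 < (⌊b/δ⌋₊:ℝ) := Nat.sub_one_lt_floor _
        have hup : (k:ℝ)*δ + δ ≤ b := by
          rw [hkcast]
          have heq : ((⌊b/δ⌋₊:ℝ) - 1)*δ + δ = (⌊b/δ⌋₊:ℝ)*δ := by ring
          rw [heq, ← le_div_iff₀ hδpos]
          exact hfl
        have hlo : b - 2*δ < (k:ℝ)*δ := by
          rw [hkcast]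
          have h3 : (b/δ - 2)*δ < ((⌊b/δ⌋₊:ℝ) - 1)*δ :=
            mul_lt_mul_of_pos_right (by linarith) hδpos
          have heq : (b/δ - 2)*δ = b - 2*δ := by field_simp
          linarith
        refine ⟨k, by linarith, ?_, ?_⟩
        · exact Set.Icc_subset_Icc (by linarith) (by rw [hexp]; linarith)
        · rw [h]
          exact Set.Icc_subset_Icc (by linarith) (by rw [hexp]; linarith)
    have hGsub : G m ⊆ {ω | ∃ t ∈ Set.Icc ((k:ℝ)*δ) (((k:ℝ)+1)*δ), ‖u t ω - z‖ < 2*ε} := by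
      intro ω hω
      have hexp : ((k:ℝ)+1)*δ = (k:ℝ)*δ + δ := by ring
      refine ⟨(k:ℝ)*δ, ⟨le_refl _, by rw [hexp]; linarith⟩, ?_⟩
      exact hω _ (hkw ⟨le_refl _, by rw [hexp]; linarith⟩) hk0
    exact le_trans (measure_mono hGsub)
      (hyp z hz (2*ε) (by linarith) N (by omega) k hkab)
  calc ℙ {ω | ‖u t₀ ω - z‖ ≤ ε} ≤ ℙ (⋃ m, G m) := measure_mono hsub
    _ = ⨆ m, ℙ (G m) := hGmono.measure_iUnion
    _ ≤ ENNReal.ofReal (cH * (2*ε) ^ β) := iSup_le hGbound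

private lemma window_set (ℙ : Measure Ω) [IsProbabilityMeasure ℙ]
    {n : ℕ} (u : ℝ → Ω → EuclideanSpace ℝ (Fin n))
    {a b β M H cH : ℝ}
    (ha : 0 < a) (hab : a < b) (hβ : 0 < β)
    (hH0 : 0 < H) (hH1 : H < 1) (hcH : 0 < cH)
    (N₁ : ℕ)
    (hyp : ∀ z : EuclideanSpace ℝ (Fin n), (∀ i, |z i| ≤ M) →
      ∀ ε : ℝ, 0 < ε → ∀ N : ℕ, N₁ ≤ N → ∀ k : ℕ,
        Set.Icc ((k : ℝ) * 2 ^ (-(N : ℝ) / H)) (((k : ℝ) + 1) * 2 ^ (-(N : ℝ) / H))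
            ⊆ Set.Icc a b →
        ℙ {ω | ∃ t ∈ Set.Icc ((k : ℝ) * 2 ^ (-(N : ℝ) / H))
                (((k : ℝ) + 1) * 2 ^ (-(N : ℝ) / H)), ‖u t ω - z‖ < ε}
          ≤ ENNReal.ofReal (cH * ε ^ β))
    (hd : 0 < β - 1/H)
    (N' : ℕ) {s : Set (EuclideanSpace ℝ (Fin n))}
    (hs_box : ∀ x ∈ s, ∀ i, |x i| ≤ M)
    (hdiam : EMetric.diam s ≤
      ENNReal.ofReal (min ((2:ℝ) ^ (-(N₁ : ℝ))) ((2:ℝ) ^ (-(N' : ℝ))))) :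
    ℙ {ω | ∃ t ∈ Set.Icc (a + (2:ℝ) ^ (-(N' : ℝ) / H)) (b - (2:ℝ) ^ (-(N' : ℝ) / H)),
        u t ω ∈ s}
      ≤ ENNReal.ofReal ((b+1) * (cH * 2 ^ β)) * (EMetric.diam s) ^ (β - 1/H) := by
  classical
  rcases s.eq_empty_or_nonempty with rfl | ⟨z, hzs⟩
  · have : {ω | ∃ t ∈ Set.Icc (a + (2:ℝ) ^ (-(N' : ℝ) / H)) (b - (2:ℝ) ^ (-(N' : ℝ) / H)),
        u t ω ∈ (∅ : Set (EuclideanSpace ℝ (Fin n)))} = ∅ := by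
      ext ω; simp
    rw [this, measure_empty]
    exact zero_le
  set r : ℝ := min ((2:ℝ) ^ (-(N₁ : ℝ))) ((2:ℝ) ^ (-(N' : ℝ))) with hrdef
  have hr : 0 < r := lt_min (Real.rpow_pos_of_pos two_pos _) (Real.rpow_pos_of_pos two_pos _)
  have hzbox : ∀ i, |z i| ≤ M := hs_box z hzs
  have hne : EMetric.diam s ≠ ⊤ := (lt_of_le_of_lt hdiam ENNReal.ofReal_lt_top).ne
  have hCpos : (0:ℝ) ≤ (b+1) * (cH * 2 ^ β) := by
    have hb : 0 < b := ha.trans hab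
    positivity
  -- the general ε-bound
  have hεbound : ∀ ε : ℝ, 0 < ε → ε ≤ r →
      (∀ x ∈ s, ‖x - z‖ ≤ ε) →
      ℙ {ω | ∃ t ∈ Set.Icc (a + (2:ℝ) ^ (-(N' : ℝ) / H)) (b - (2:ℝ) ^ (-(N' : ℝ) / H)),
        u t ω ∈ s} ≤ ENNReal.ofReal ((b+1) * (cH * 2 ^ β) * ε ^ (β - 1/H)) := by
    intro ε hε hεr hclose
    refine le_trans (measure_mono ?_)
      (window_ball ℙ u ha hab hβ hH0 hH1 hcH N₁ hyp z hzbox N' hε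
        (hεr.trans (min_le_left _ _)) (hεr.trans (min_le_right _ _)))
    rintro ω ⟨t, ht, hts⟩
    exact ⟨t, ht, hclose _ hts⟩
  by_cases h0 : EMetric.diam s = 0
  · -- diameter zero: the probability is 0
    rw [h0, ENNReal.zero_rpow_of_pos hd, mul_zero]
    have hq : (0:ℝ) ≤ ((1/2:ℝ)) ^ (β - 1/H) := by positivity
    have hq1 : ((1/2:ℝ)) ^ (β - 1/H) < 1 :=
      Real.rpow_lt_one (by norm_num) (by norm_num) hd
    have hstep : ∀ j : ℕ,
        ℙ {ω | ∃ t ∈ Set.Icc (a + (2:ℝ) ^ (-(N' : ℝ) / H)) (b - (2:ℝ) ^ (-(N' : ℝ) / H)),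
          u t ω ∈ s} ≤ ENNReal.ofReal (((b+1) * (cH * 2 ^ β) * r ^ (β - 1/H)) *
            (((1/2:ℝ)) ^ (β - 1/H)) ^ j) := by
      intro j
      have hεj : (0:ℝ) < r * (1/2)^j := by have := hr; positivity
      have hεjr : r * (1/2)^j ≤ r := by
        have h2 : ((1/2:ℝ))^j ≤ 1 := pow_le_one₀ (by norm_num) (by norm_num)
        nlinarith
      have hclose : ∀ x ∈ s, ‖x - z‖ ≤ r * (1/2)^j := by
        intro x hxs
        have h1 : edist x z ≤ EMetric.diam s := EMetric.edist_le_diam_of_mem hxs hzs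
        rw [h0, nonpos_iff_eq_zero, edist_eq_zero] at h1
        rw [h1]
        simpa using hεj.le
      refine le_trans (hεbound _ hεj hεjr hclose) (le_of_eq ?_)
      congr 1
      rw [Real.mul_rpow hr.le (by positivity)]
      have : (((1/2:ℝ))^j) ^ (β - 1/H) = (((1/2:ℝ)) ^ (β - 1/H)) ^ j := by
        rw [← Real.rpow_natCast ((1/2:ℝ)) j, ← Real.rpow_natCast (((1/2:ℝ)) ^ (β - 1/H)) j,
          ← Real.rpow_mul (by norm_num), ← Real.rpow_mul (by norm_num)]
        congr 1
        ring
      rw [this]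
      ring
    have htend : Filter.Tendsto
        (fun j : ℕ => ENNReal.ofReal (((b+1) * (cH * 2 ^ β) * r ^ (β - 1/H)) *
            (((1/2:ℝ)) ^ (β - 1/H)) ^ j)) Filter.atTop (nhds 0) := by
      have hreal : Filter.Tendsto
          (fun j : ℕ => ((b+1) * (cH * 2 ^ β) * r ^ (β - 1/H)) *
            (((1/2:ℝ)) ^ (β - 1/H)) ^ j) Filter.atTop (nhds 0) := by
        have := tendsto_pow_atTop_nhds_zero_of_lt_one hq hq1
        simpa using this.const_mul ((b+1) * (cH * 2 ^ β) * r ^ (β - 1/H))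
      have := (ENNReal.continuous_ofReal.tendsto 0).comp hreal
      simpa [Function.comp_def] using this
    exact ge_of_tendsto' htend hstep
  · set ε : ℝ := (EMetric.diam s).toReal with hεdef
    have hεpos : 0 < ε := ENNReal.toReal_pos h0 hne
    have hεr : ε ≤ r := ENNReal.toReal_le_of_le_ofReal hr.le hdiam
    have hclose : ∀ x ∈ s, ‖x - z‖ ≤ ε := by
      intro x hxs
      have h1 : edist x z ≤ EMetric.diam s := EMetric.edist_le_diam_of_mem hxs hzs
      have h2 : dist x z ≤ ε := by
        rw [dist_edist]
        exact ENNReal.toReal_mono hne h1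
      rw [← dist_eq_norm]
      exact h2
    refine le_trans (hεbound ε hεpos hεr hclose) (le_of_eq ?_)
    rw [ENNReal.ofReal_mul hCpos, ← ENNReal.ofReal_rpow_of_pos hεpos,
      ENNReal.ofReal_toReal hne]

private lemma point_set (ℙ : Measure Ω) [IsProbabilityMeasure ℙ]
    {n : ℕ} (u : ℝ → Ω → EuclideanSpace ℝ (Fin n))
    (hu_cont : ∀ ω, ContinuousOn (fun t => u t ω) (Set.Ici (0 : ℝ)))
    {a b β M H cH : ℝ}
    (ha : 0 < a) (hab : a < b) (hβ : 0 < β)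
    (hH0 : 0 < H) (hH1 : H < 1) (hcH : 0 < cH)
    (N₁ : ℕ)
    (hyp : ∀ z : EuclideanSpace ℝ (Fin n), (∀ i, |z i| ≤ M) →
      ∀ ε : ℝ, 0 < ε → ∀ N : ℕ, N₁ ≤ N → ∀ k : ℕ,
        Set.Icc ((k : ℝ) * 2 ^ (-(N : ℝ) / H)) (((k : ℝ) + 1) * 2 ^ (-(N : ℝ) / H))
            ⊆ Set.Icc a b →
        ℙ {ω | ∃ t ∈ Set.Icc ((k : ℝ) * 2 ^ (-(N : ℝ) / H))
                (((k : ℝ) + 1) * 2 ^ (-(N : ℝ) / H)), ‖u t ω - z‖ < ε}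
          ≤ ENNReal.ofReal (cH * ε ^ β))
    (hd : 0 < β - 1/H)
    (t₀ : ℝ) (ht₀ : t₀ = a ∨ t₀ = b)
    {s : Set (EuclideanSpace ℝ (Fin n))}
    (hs_box : ∀ x ∈ s, ∀ i, |x i| ≤ M)
    (hdiam : EMetric.diam s ≤ ENNReal.ofReal 1) :
    ℙ {ω | u t₀ ω ∈ s}
      ≤ ENNReal.ofReal (cH * 2 ^ β) * (EMetric.diam s) ^ (β - 1/H) := by
  classical
  rcases s.eq_empty_or_nonempty with rfl | ⟨z, hzs⟩
  · have : {ω | u t₀ ω ∈ (∅ : Set (EuclideanSpace ℝ (Fin n)))} = ∅ := by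
      ext ω; simp
    rw [this, measure_empty]
    exact zero_le
  have hzbox : ∀ i, |z i| ≤ M := hs_box z hzs
  have hne : EMetric.diam s ≠ ⊤ := (lt_of_le_of_lt hdiam ENNReal.ofReal_lt_top).ne
  have hCpos : (0:ℝ) ≤ cH * 2 ^ β := by positivity
  have hεbound : ∀ ε : ℝ, 0 < ε → ε ≤ 1 →
      (∀ x ∈ s, ‖x - z‖ ≤ ε) →
      ℙ {ω | u t₀ ω ∈ s} ≤ ENNReal.ofReal ((cH * 2 ^ β) * ε ^ (β - 1/H)) := by
    intro ε hε hεr hclose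
    refine le_trans (le_trans (measure_mono ?_)
      (point_ball ℙ u hu_cont ha hab hβ hH0 hH1 hcH N₁ hyp z hzbox hε t₀ ht₀)) ?_
    · intro ω hω
      exact hclose _ hω
    · apply ENNReal.ofReal_le_ofReal
      have h1 : (2*ε)^β = 2^β * ε^β := Real.mul_rpow (by norm_num) hε.le
      have h2 : ε^β ≤ ε^(β-1/H) := by
        apply Real.rpow_le_rpow_of_exponent_ge hε hεr
        have : 0 < 1/H := by positivity
        linarith
      calc cH * (2*ε)^β = (cH * 2^β) * ε^β := by rw [h1]; ring
        _ ≤ (cH * 2^β) * ε^(β-1/H) := mul_le_mul_of_nonneg_left h2 hCpos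
  by_cases h0 : EMetric.diam s = 0
  · rw [h0, ENNReal.zero_rpow_of_pos hd, mul_zero]
    have hq : (0:ℝ) ≤ ((1/2:ℝ)) ^ (β - 1/H) := by positivity
    have hq1 : ((1/2:ℝ)) ^ (β - 1/H) < 1 :=
      Real.rpow_lt_one (by norm_num) (by norm_num) hd
    have hstep : ∀ j : ℕ, ℙ {ω | u t₀ ω ∈ s} ≤
        ENNReal.ofReal ((cH * 2 ^ β) * (((1/2:ℝ)) ^ (β - 1/H)) ^ (j+1)) := by
      intro j
      have hεj : (0:ℝ) < (1/2)^(j+1) := by positivity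
      have hεjr : ((1/2:ℝ))^(j+1) ≤ 1 := pow_le_one₀ (by norm_num) (by norm_num)
      have hclose : ∀ x ∈ s, ‖x - z‖ ≤ ((1/2:ℝ))^(j+1) := by
        intro x hxs
        have h1 : edist x z ≤ EMetric.diam s := EMetric.edist_le_diam_of_mem hxs hzs
        rw [h0, nonpos_iff_eq_zero, edist_eq_zero] at h1
        rw [h1]
        simpa using hεj.le
      refine le_trans (hεbound _ hεj hεjr hclose) (le_of_eq ?_)
      congr 1
      have : (((1/2:ℝ))^(j+1)) ^ (β - 1/H) = (((1/2:ℝ)) ^ (β - 1/H)) ^ (j+1) := by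
        rw [← Real.rpow_natCast ((1/2:ℝ)) (j+1),
          ← Real.rpow_natCast (((1/2:ℝ)) ^ (β - 1/H)) (j+1),
          ← Real.rpow_mul (by norm_num), ← Real.rpow_mul (by norm_num)]
        congr 1
        ring
      rw [this]
    have htend : Filter.Tendsto
        (fun j : ℕ => ENNReal.ofReal ((cH * 2 ^ β) * (((1/2:ℝ)) ^ (β - 1/H)) ^ (j+1)))
        Filter.atTop (nhds 0) := by
      have hreal : Filter.Tendsto
          (fun j : ℕ => (cH * 2 ^ β) * (((1/2:ℝ)) ^ (β - 1/H)) ^ (j+1))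
          Filter.atTop (nhds 0) := by
        have h1 := tendsto_pow_atTop_nhds_zero_of_lt_one hq hq1
        have h2 : Filter.Tendsto (fun j : ℕ => (((1/2:ℝ)) ^ (β - 1/H)) ^ (j+1))
            Filter.atTop (nhds 0) := by
          have := h1.comp (Filter.tendsto_add_atTop_nat 1)
          simpa [Function.comp_def] using this
        simpa using h2.const_mul (cH * 2 ^ β)
      have := (ENNReal.continuous_ofReal.tendsto 0).comp hreal
      simpa [Function.comp_def] using this
    exact ge_of_tendsto' htend hstep
  · set ε : ℝ := (EMetric.diam s).toReal with hεdef
    have hεpos : 0 < ε := ENNReal.toReal_pos h0 hne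
    have hεr : ε ≤ 1 := ENNReal.toReal_le_of_le_ofReal (by norm_num) hdiam
    have hclose : ∀ x ∈ s, ‖x - z‖ ≤ ε := by
      intro x hxs
      have h1 : edist x z ≤ EMetric.diam s := EMetric.edist_le_diam_of_mem hxs hzs
      have h2 : dist x z ≤ ε := by
        rw [dist_edist]
        exact ENNReal.toReal_mono hne h1
      rw [← dist_eq_norm]
      exact h2
    refine le_trans (hεbound ε hεpos hεr hclose) (le_of_eq ?_)
    rw [ENNReal.ofReal_mul hCpos, ← ENNReal.ofReal_rpow_of_pos hεpos,
      ENNReal.ofReal_toReal hne]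

private lemma le_hausdorff_of_cover
    {X : Type*} [EMetricSpace X] [MeasurableSpace X] [BorelSpace X]
    (ℙ : Measure Ω) (E : Set X → Set Ω) (A : Set X)
    (hmono : ∀ ⦃s s' : Set X⦄, s ⊆ s' → E s ⊆ E s')
    (hE : ∀ f : ℕ → Set X, E (⋃ m, f m) ⊆ ⋃ m, E (f m))
    {d C r : ℝ} (hd : 0 < d) (hC : 0 < C) (hr : 0 < r)
    (hbound : ∀ s : Set X, s ⊆ A → EMetric.diam s ≤ ENNReal.ofReal r →
        ℙ (E s) ≤ ENNReal.ofReal C * (EMetric.diam s) ^ d) :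
    ℙ (E A) ≤ ENNReal.ofReal C * μH[d] A := by
  have hC0 : (ENNReal.ofReal C) ≠ 0 := (ENNReal.ofReal_pos.mpr hC).ne'
  have hCt : (ENNReal.ofReal C) ≠ ⊤ := ENNReal.ofReal_ne_top
  have key : ∀ (t : ℕ → Set X), (A ⊆ ⋃ m, t m) →
      (∀ m, EMetric.diam (t m) ≤ ENNReal.ofReal r) →
      ℙ (E A) ≤ ENNReal.ofReal C *
        ∑' m, ⨆ _ : (t m).Nonempty, EMetric.diam (t m) ^ d := by
    intro t hcov hdiam
    have hAsub : A ⊆ ⋃ m, A ∩ t m := by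
      intro x hx
      obtain ⟨m, hm⟩ := Set.mem_iUnion.mp (hcov hx)
      exact Set.mem_iUnion.mpr ⟨m, hx, hm⟩
    calc ℙ (E A) ≤ ℙ (E (⋃ m, A ∩ t m)) := measure_mono (hmono hAsub)
      _ ≤ ℙ (⋃ m, E (A ∩ t m)) := measure_mono (hE _)
      _ ≤ ∑' m, ℙ (E (A ∩ t m)) := measure_iUnion_le _
      _ ≤ ∑' m, ENNReal.ofReal C * (⨆ _ : (t m).Nonempty, EMetric.diam (t m) ^ d) := by
          apply ENNReal.tsum_le_tsum
          intro m
          have h1 : ℙ (E (A ∩ t m)) ≤ ENNReal.ofReal C * (EMetric.diam (A ∩ t m)) ^ d :=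
            hbound _ Set.inter_subset_left
              ((EMetric.diam_mono Set.inter_subset_right).trans (hdiam m))
          rcases (A ∩ t m).eq_empty_or_nonempty with he | hne
          · have hd0 : EMetric.diam (A ∩ t m) = 0 := by rw [he]; exact EMetric.diam_empty
            rw [hd0, ENNReal.zero_rpow_of_pos hd, mul_zero] at h1
            exact le_trans h1 zero_le
          · have htm : (t m).Nonempty := ⟨hne.some, hne.some_mem.2⟩
            rw [iSup_pos htm]
            refine le_trans h1 (mul_le_mul_right ?_ _)
            exact ENNReal.rpow_le_rpow (EMetric.diam_mono Set.inter_subset_right) hd.le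
      _ = ENNReal.ofReal C * ∑' m, ⨆ _ : (t m).Nonempty, EMetric.diam (t m) ^ d :=
          ENNReal.tsum_mul_left
  have h1 : ℙ (E A) ≤ ENNReal.ofReal C *
      ⨅ (t : ℕ → Set X) (_ : A ⊆ ⋃ m, t m)
        (_ : ∀ m, EMetric.diam (t m) ≤ ENNReal.ofReal r),
        ∑' m, ⨆ _ : (t m).Nonempty, EMetric.diam (t m) ^ d := by
    rw [ENNReal.mul_iInf_of_ne hC0 hCt]
    refine le_iInf fun t => ?_
    rw [ENNReal.mul_iInf_of_ne hC0 hCt]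
    refine le_iInf fun hcov => ?_
    rw [ENNReal.mul_iInf_of_ne hC0 hCt]
    exact le_iInf fun hdiam => key t hcov hdiam
  refine le_trans h1 (mul_le_mul_right ?_ _)
  rw [MeasureTheory.Measure.hausdorffMeasure_apply]
  exact le_iSup₂ (f := fun (r' : ℝ≥0∞) (_ : 0 < r') =>
    ⨅ (t : ℕ → Set X) (_ : A ⊆ ⋃ m, t m) (_ : ∀ m, EMetric.diam (t m) ≤ r'),
      ∑' m, ⨆ _ : (t m).Nonempty, EMetric.diam (t m) ^ d)
    (ENNReal.ofReal r) (ENNReal.ofReal_pos.mpr hr)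

end main

/-- Upper bound on hitting probabilities in terms of Hausdorff measure:
if the probability that `u` hits the ball `B(z,ε)` during a dyadic interval of length
`2^{-N/H}` is at most `c_H ε^β`, then the probability that `u([a,b])` meets a Borel set
`A ⊆ [-M,M]ⁿ` is at most `C · ℋ_{β - 1/H}(A)`. -/
theorem stmt3
    {Ω : Type*} [MeasurableSpace Ω] (ℙ : Measure Ω) [IsProbabilityMeasure ℙ]
    (n : ℕ) (u : ℝ → Ω → EuclideanSpace ℝ (Fin n))
    (hu_cont : ∀ ω, ContinuousOn (fun t => u t ω) (Set.Ici (0 : ℝ)))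
    (a b β M H cH : ℝ)
    (ha : 0 < a) (hab : a < b) (hβ : 0 < β) (hM : 0 < M)
    (hH0 : 0 < H) (hH1 : H < 1) (hcH : 0 < cH)
    (N₁ : ℕ)
    (hyp : ∀ z : EuclideanSpace ℝ (Fin n), (∀ i, |z i| ≤ M) →
      ∀ ε : ℝ, 0 < ε → ∀ N : ℕ, N₁ ≤ N → ∀ k : ℕ,
        Set.Icc ((k : ℝ) * 2 ^ (-(N : ℝ) / H)) (((k : ℝ) + 1) * 2 ^ (-(N : ℝ) / H))
            ⊆ Set.Icc a b →
        ℙ {ω | ∃ t ∈ Set.Icc ((k : ℝ) * 2 ^ (-(N : ℝ) / H))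
                (((k : ℝ) + 1) * 2 ^ (-(N : ℝ) / H)), ‖u t ω - z‖ < ε}
          ≤ ENNReal.ofReal (cH * ε ^ β)) :
    ∃ C : ℝ, 0 < C ∧ ∀ A : Set (EuclideanSpace ℝ (Fin n)), MeasurableSet A →
      (∀ z ∈ A, ∀ i, |z i| ≤ M) →
      ℙ {ω | ∃ t ∈ Set.Icc a b, u t ω ∈ A}
        ≤ ENNReal.ofReal C * μH[β - 1 / H] A := by
  classical
  have hb : 0 < b := ha.trans hab
  by_cases hd : 0 < β - 1/H
  · -- main case
    refine ⟨(b+1) * (cH * 2 ^ β) + (cH * 2 ^ β) + (cH * 2 ^ β), by positivity, ?_⟩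
    intro A _hA hAbox
    set Em : ℕ → Set Ω := fun N' =>
      {ω | ∃ t ∈ Set.Icc (a + (2:ℝ) ^ (-(N' : ℝ) / H)) (b - (2:ℝ) ^ (-(N' : ℝ) / H)),
        u t ω ∈ A} with hEmdef
    have hsplit : {ω | ∃ t ∈ Set.Icc a b, u t ω ∈ A} ⊆
        ({ω | u a ω ∈ A} ∪ {ω | u b ω ∈ A}) ∪ ⋃ N', Em N' := by
      rintro ω ⟨t, ⟨ht1, ht2⟩, htA⟩
      by_cases hta : t = a
      · rw [hta] at htA
        exact Or.inl (Or.inl htA)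
      by_cases htb : t = b
      · rw [htb] at htA
        exact Or.inl (Or.inr htA)
      have hlt1 : a < t := lt_of_le_of_ne ht1 (Ne.symm hta)
      have hlt2 : t < b := lt_of_le_of_ne ht2 htb
      obtain ⟨N', hN'⟩ := grid_small hH0 (show (0:ℝ) < min (t - a) (b - t) by
        apply lt_min <;> linarith)
      rw [lt_min_iff] at hN'
      exact Or.inr (Set.mem_iUnion.mpr ⟨N', t,
        ⟨by linarith [hN'.1], by linarith [hN'.2]⟩, htA⟩)
    have hEmono : Monotone Em := by
      intro N N' hNN' ω hω
      obtain ⟨t, ⟨h1, h2⟩, h3⟩ := hω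
      have := grid_anti hH0 hNN'
      exact ⟨t, ⟨by linarith, by linarith⟩, h3⟩
    have hmidb : ∀ N', ℙ (Em N') ≤
        ENNReal.ofReal ((b+1) * (cH * 2 ^ β)) * μH[β - 1/H] A := by
      intro N'
      have hr : (0:ℝ) < min ((2:ℝ) ^ (-(N₁ : ℝ))) ((2:ℝ) ^ (-(N' : ℝ))) :=
        lt_min (Real.rpow_pos_of_pos two_pos _) (Real.rpow_pos_of_pos two_pos _)
      refine le_hausdorff_of_cover ℙ
        (fun s => {ω | ∃ t ∈ Set.Icc (a + (2:ℝ) ^ (-(N' : ℝ) / H))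
            (b - (2:ℝ) ^ (-(N' : ℝ) / H)), u t ω ∈ s}) A
        ?_ ?_ hd (by positivity) hr ?_
      · intro s s' hss ω hω
        obtain ⟨t, ht, hts⟩ := hω
        exact ⟨t, ht, hss hts⟩
      · intro f ω hω
        obtain ⟨t, ht, htm⟩ := hω
        obtain ⟨m, hm⟩ := Set.mem_iUnion.mp htm
        exact Set.mem_iUnion.mpr ⟨m, t, ht, hm⟩
      · intro s hsA hsdiam
        exact window_set ℙ u ha hab hβ hH0 hH1 hcH N₁ hyp hd N'
          (fun x hx => hAbox x (hsA hx)) hsdiam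
    have hptb : ∀ t₀, t₀ = a ∨ t₀ = b → ℙ {ω | u t₀ ω ∈ A} ≤
        ENNReal.ofReal (cH * 2 ^ β) * μH[β - 1/H] A := by
      intro t₀ ht₀
      refine le_hausdorff_of_cover ℙ (fun s => {ω | u t₀ ω ∈ s}) A
        ?_ ?_ hd (by positivity) one_pos ?_
      · intro s s' hss ω hω
        exact hss hω
      · intro f ω hω
        obtain ⟨m, hm⟩ := Set.mem_iUnion.mp hω
        exact Set.mem_iUnion.mpr ⟨m, hm⟩
      · intro s hsA hsdiam
        rw [show ENNReal.ofReal (1:ℝ) = 1 from ENNReal.ofReal_one] at hsdiam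
        exact point_set ℙ u hu_cont ha hab hβ hH0 hH1 hcH N₁ hyp hd t₀ ht₀
          (fun x hx => hAbox x (hsA hx)) (by rw [ENNReal.ofReal_one]; exact hsdiam)
    calc ℙ {ω | ∃ t ∈ Set.Icc a b, u t ω ∈ A}
        ≤ ℙ (({ω | u a ω ∈ A} ∪ {ω | u b ω ∈ A}) ∪ ⋃ N', Em N') := measure_mono hsplit
      _ ≤ ℙ ({ω | u a ω ∈ A} ∪ {ω | u b ω ∈ A}) + ℙ (⋃ N', Em N') := measure_union_le _ _
      _ ≤ (ℙ {ω | u a ω ∈ A} + ℙ {ω | u b ω ∈ A}) + ℙ (⋃ N', Em N') :=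
          add_le_add_left (measure_union_le _ _) _
      _ ≤ (ENNReal.ofReal (cH * 2 ^ β) * μH[β - 1/H] A +
            ENNReal.ofReal (cH * 2 ^ β) * μH[β - 1/H] A) +
          ENNReal.ofReal ((b+1) * (cH * 2 ^ β)) * μH[β - 1/H] A := by
          apply add_le_add
          · exact add_le_add (hptb a (Or.inl rfl)) (hptb b (Or.inr rfl))
          · rw [hEmono.measure_iUnion]
            exact iSup_le hmidb
      _ = ENNReal.ofReal ((b+1) * (cH * 2 ^ β) + (cH * 2 ^ β) + (cH * 2 ^ β)) *
            μH[β - 1/H] A := by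
          rw [← add_mul, ← add_mul]
          congr 1
          rw [← ENNReal.ofReal_add (by positivity) (by positivity),
            ← ENNReal.ofReal_add (by positivity) (by positivity)]
          congr 1
          ring
  · -- degenerate case : β - 1/H ≤ 0
    refine ⟨1, one_pos, ?_⟩
    intro A _hA _hAbox
    rcases A.eq_empty_or_nonempty with rfl | ⟨z₀, hz₀⟩
    · have : {ω | ∃ t ∈ Set.Icc a b, u t ω ∈ (∅ : Set (EuclideanSpace ℝ (Fin n)))} = ∅ := by
        ext ω; simp
      rw [this, measure_empty]
      exact zero_le
    · have hd' : β - 1/H ≤ 0 := not_lt.mp hd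
      have h1 : (1:ℝ≥0∞) ≤ μH[β - 1/H] A := by
        rw [MeasureTheory.Measure.hausdorffMeasure_apply]
        refine le_trans ?_ (le_iSup₂ (f := fun (r' : ℝ≥0∞) (_ : 0 < r') =>
          ⨅ (t : ℕ → Set (EuclideanSpace ℝ (Fin n))) (_ : A ⊆ ⋃ m, t m)
            (_ : ∀ m, EMetric.diam (t m) ≤ r'),
            ∑' m, ⨆ _ : (t m).Nonempty, EMetric.diam (t m) ^ (β - 1/H))
          1 zero_lt_one)
        refine le_iInf fun t => le_iInf fun hcov => le_iInf fun hdiam => ?_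
        obtain ⟨m, hm⟩ := Set.mem_iUnion.mp (hcov hz₀)
        refine le_trans ?_ (ENNReal.le_tsum m)
        rw [iSup_pos ⟨z₀, hm⟩]
        rcases eq_or_lt_of_le hd' with hd0 | hdneg
        · rw [hd0, ENNReal.rpow_zero]
        · rcases eq_or_ne (EMetric.diam (t m)) 0 with h0 | h0
          · rw [h0, ENNReal.zero_rpow_of_neg hdneg]
            exact le_top
          · calc (1:ℝ≥0∞) = (EMetric.diam (t m)) ^ (0:ℝ) := by rw [ENNReal.rpow_zero]
              _ ≤ (EMetric.diam (t m)) ^ (β - 1/H) :=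
                ENNReal.rpow_le_rpow_of_exponent_ge (hdiam m) hd'
      calc ℙ {ω | ∃ t ∈ Set.Icc a b, u t ω ∈ A} ≤ 1 := prob_le_one
        _ ≤ μH[β - 1/H] A := h1
        _ = ENNReal.ofReal 1 * μH[β - 1/H] A := by rw [ENNReal.ofReal_one, one_mul]
end

section
/- Let H ∈ (1/2, 1) and γ > H − 1/2. There exists a constant C > 0 (depending only on H, γ) such that for every γ-Hölder continuous function f : [0,1] → ℝ and all 0 ≤ s < t ≤ 1: ∫ₛᵗ ( ∫ᵤᵗ (v − u)^{H − 3/2} f(v) dv )² du ≥ C · (t − s)^{2H} · (min_{[0,1]} |f|)⁴ / ( ‖f‖_∞² + ‖f‖_γ² ). -/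
open MeasureTheory Set

/-- Supremum norm of `f` over `[0,1]`: `‖f‖_∞ = sup_{u ∈ [0,1]} ‖f u‖`. -/
noncomputable def supNorm01 {E : Type*} [NormedAddCommGroup E] (f : ℝ → E) : ℝ :=
  sSup ((fun u => ‖f u‖) '' Set.Icc (0 : ℝ) 1)

/-- Minimum of `‖f‖` over `[0,1]`: `min_{u ∈ [0,1]} ‖f u‖`. -/
noncomputable def minNorm01 {E : Type*} [NormedAddCommGroup E] (f : ℝ → E) : ℝ :=
  sInf ((fun u => ‖f u‖) '' Set.Icc (0 : ℝ) 1)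

/-- Hölder seminorm of exponent `γ` of `f` on `[0,1]`:
`‖f‖_γ = sup_{0 ≤ u < v ≤ 1} ‖f v - f u‖ / (v - u)^γ`. -/
noncomputable def holderNorm01 {E : Type*} [NormedAddCommGroup E] (γ : ℝ) (f : ℝ → E) : ℝ :=
  sSup {c : ℝ | ∃ u v : ℝ, 0 ≤ u ∧ u < v ∧ v ≤ 1 ∧ c = ‖f v - f u‖ / (v - u) ^ γ}

section AuxLemmas
open intervalIntegral


lemma power_int (p : ℝ) (hp : -1 < p) (hp0 : p + 1 ≠ 0) (u t : ℝ) :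
    ∫ v in u..t, (v - u) ^ p = (t - u) ^ (p+1) / (p+1) := by
  rw [intervalIntegral.integral_comp_sub_right (fun x => x ^ p) u]
  rw [integral_rpow (Or.inl hp)]
  simp [Real.zero_rpow hp0]

lemma power_intble (p : ℝ) (hp : -1 < p) (u t : ℝ) :
    IntervalIntegrable (fun v => (v - u) ^ p) volume u t := by
  have := (intervalIntegrable_rpow' (a := u - u) (b := t - u) hp).comp_sub_right u
  simpa using this

lemma inner_intble (p : ℝ) (hp : -1 < p) (g : ℝ → ℝ) (hg : Continuous g) (M : ℝ)
    (hgM : ∀ x, |g x| ≤ M) (u t : ℝ) (hut : u ≤ t) :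
    IntervalIntegrable (fun v => (v-u)^p * g v) volume u t := by
  apply IntervalIntegrable.mono_fun ((power_intble p hp u t).mul_const M)
  · exact Measurable.aestronglyMeasurable (by fun_prop)
  · rw [uIoc_of_le hut]
    filter_upwards [ae_restrict_mem measurableSet_Ioc] with v hv
    have hv' : 0 < v - u := by simp at hv; linarith [hv.1]
    have hvp : 0 < (v - u) ^ p := Real.rpow_pos_of_pos hv' p
    simp only [Real.norm_eq_abs, abs_mul]
    rw [abs_of_pos hvp, abs_of_nonneg (abs_nonneg (g v) |>.trans (hgM v))]
    exact mul_le_mul_of_nonneg_left (hgM v) hvp.le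

lemma key_lemma (H : ℝ) (hH : 1/2 < H) (hH1 : H < 1)
    (g : ℝ → ℝ) (hg : Continuous g) (m M : ℝ) (hm : 0 < m)
    (hgm : ∀ x, m ≤ g x) (hgM : ∀ x, |g x| ≤ M)
    (s t : ℝ) (hst : s ≤ t) (ht1 : t - s ≤ 1) :
    (m / (H - 1/2))^2 * ((t-s)^(2*H) / (2*H)) ≤
      ∫ u in s..t, (∫ v in u..t, (v-u)^(H-3/2) * g v)^2 := by
  set p : ℝ := H - 3/2 with hpdef
  have hp : -1 < p := by rw [hpdef]; linarith
  have hp1 : p + 1 = H - 1/2 := by rw [hpdef]; ring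
  have hq : (0:ℝ) < H - 1/2 := by linarith
  have hp0 : p + 1 ≠ 0 := by rw [hp1]; linarith
  have hmM : m ≤ M := le_trans (le_trans (hgm 0) (le_abs_self _)) (hgM 0)
  have hM : 0 < M := lt_of_lt_of_le hm hmM
  -- lower bound for inner integral
  have hlow : ∀ u, u ≤ t → m * ((t-u)^(H-1/2) / (H-1/2)) ≤ ∫ v in u..t, (v-u)^p * g v := by
    intro u hut
    have h1 : ∫ v in u..t, (v-u)^p * m = m * ((t-u)^(H-1/2) / (H-1/2)) := by
      rw [intervalIntegral.integral_mul_const, power_int p hp hp0 u t, hp1, mul_comm]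
    rw [← h1]
    apply intervalIntegral.integral_mono_on hut ((power_intble p hp u t).mul_const m)
      (inner_intble p hp g hg M hgM u t hut)
    intro v hv
    have hvp : 0 ≤ (v - u) ^ p := Real.rpow_nonneg (by linarith [hv.1]) p
    exact mul_le_mul_of_nonneg_left (hgm v) hvp
  -- upper bound for inner integral
  have hup : ∀ u, s ≤ u → u ≤ t → |∫ v in u..t, (v-u)^p * g v| ≤ M / (H-1/2) := by
    intro u hsu hut
    have h2 : |∫ v in u..t, (v-u)^p * g v| ≤ ∫ v in u..t, |(v-u)^p * g v| :=
      intervalIntegral.abs_integral_le_integral_abs hut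
    have h3 : (∫ v in u..t, |(v-u)^p * g v|) ≤ ∫ v in u..t, (v-u)^p * M := by
      apply intervalIntegral.integral_mono_on hut
        (inner_intble p hp g hg M hgM u t hut).abs ((power_intble p hp u t).mul_const M)
      intro v hv
      have hvp : 0 ≤ (v - u) ^ p := Real.rpow_nonneg (by linarith [hv.1]) p
      rw [abs_mul, abs_of_nonneg hvp]
      exact mul_le_mul_of_nonneg_left (hgM v) hvp
    have h4 : ∫ v in u..t, (v-u)^p * M = M * ((t-u)^(H-1/2) / (H-1/2)) := by
      rw [intervalIntegral.integral_mul_const, power_int p hp hp0 u t, hp1, mul_comm]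
    have h5 : (t-u)^(H-1/2) ≤ 1 :=
      Real.rpow_le_one (by linarith) (by linarith) hq.le
    calc |∫ v in u..t, (v-u)^p * g v| ≤ M * ((t-u)^(H-1/2) / (H-1/2)) := by
          rw [← h4]; exact h2.trans h3
      _ ≤ M * (1 / (H-1/2)) := by gcongr
      _ = M / (H-1/2) := by ring
  -- measurable version of the inner integral
  set I : ℝ → ℝ := fun u => ∫ v, (Set.Ioc u t).indicator (fun v => (v-u)^p * g v) v with hIdef
  have hI_eq : ∀ u, u ≤ t → (∫ v in u..t, (v-u)^p * g v) = I u := by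
    intro u hut
    rw [hIdef, intervalIntegral.integral_of_le hut]
    exact (MeasureTheory.integral_indicator measurableSet_Ioc).symm
  have hImeas : Measurable I := by
    have hF : Measurable (fun q : ℝ × ℝ =>
        ({q : ℝ × ℝ | q.1 < q.2 ∧ q.2 ≤ t}).indicator (fun q => (q.2-q.1)^p * g q.2) q) := by
      apply Measurable.indicator (by fun_prop)
      exact (measurableSet_lt measurable_fst measurable_snd).inter
        (measurableSet_le measurable_snd measurable_const)
    have hIeq2 : I = fun u => ∫ v, ({q : ℝ × ℝ | q.1 < q.2 ∧ q.2 ≤ t}).indicator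
        (fun q => (q.2-q.1)^p * g q.2) (u, v) := rfl
    rw [hIeq2]
    exact (hF.stronglyMeasurable.integral_prod_right' (ν := volume)).measurable
  -- integrability of I^2 on [s,t]
  have hI2_intble : IntervalIntegrable (fun u => (I u)^2) volume s t := by
    apply IntervalIntegrable.mono_fun (_root_.intervalIntegrable_const (c := (M/(H-1/2))^2))
    · exact Measurable.aestronglyMeasurable (by fun_prop)
    · rw [uIoc_of_le hst]
      filter_upwards [ae_restrict_mem measurableSet_Ioc] with u hu
      have h6 := hup u hu.1.le hu.2
      rw [hI_eq u hu.2] at h6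
      simp only [Real.norm_eq_abs]
      rw [abs_of_nonneg (sq_nonneg (I u)), abs_of_nonneg (by positivity : (0:ℝ) ≤ (M/(H-1/2))^2)]
      calc (I u)^2 = |I u|^2 := (sq_abs _).symm
        _ ≤ (M/(H-1/2))^2 := by gcongr
  -- lower-bound function integrability and value
  have hlowint : IntervalIntegrable (fun u => (m/(H-1/2))^2 * (t-u)^(2*H-1)) volume s t := by
    apply IntervalIntegrable.const_mul
    have := (intervalIntegrable_rpow' (a := t - s) (b := t - t)
      (by linarith : (-1:ℝ) < 2*H-1)).comp_sub_left t
    simpa using this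
  have hlowval : ∫ u in s..t, (m/(H-1/2))^2 * (t-u)^(2*H-1)
      = (m/(H-1/2))^2 * ((t-s)^(2*H) / (2*H)) := by
    rw [intervalIntegral.integral_const_mul]
    congr 1
    rw [intervalIntegral.integral_comp_sub_left (fun x => x ^ (2*H-1)) t]
    rw [integral_rpow (Or.inl (by linarith : (-1:ℝ) < 2*H-1))]
    have : 2*H-1+1 = 2*H := by ring
    rw [this, sub_self, Real.zero_rpow (by linarith : 2*H ≠ 0)]
    ring_nf
  -- pointwise comparison
  have hpt : ∀ u ∈ Set.Icc s t, (m/(H-1/2))^2 * (t-u)^(2*H-1) ≤ (I u)^2 := by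
    intro u hu
    have h7 := hlow u hu.2
    rw [hI_eq u hu.2] at h7
    have h8 : 0 ≤ m * ((t-u)^(H-1/2) / (H-1/2)) := by
      have : (0:ℝ) ≤ (t-u)^(H-1/2) := Real.rpow_nonneg (by linarith [hu.2]) _
      positivity
    have h9 : (m * ((t-u)^(H-1/2) / (H-1/2)))^2 ≤ (I u)^2 := by
      apply sq_le_sq' (by linarith) h7
    calc (m/(H-1/2))^2 * (t-u)^(2*H-1)
        = (m * ((t-u)^(H-1/2) / (H-1/2)))^2 := by
          have ht0 : (0:ℝ) ≤ t - u := by linarith [hu.2]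
          have : ((t-u)^(H-1/2))^2 = (t-u)^(2*H-1) := by
            rw [← Real.rpow_natCast ((t-u)^(H-1/2)) 2, ← Real.rpow_mul ht0]
            norm_num; ring_nf
          rw [← this]; ring
      _ ≤ (I u)^2 := h9
  calc (m / (H - 1/2))^2 * ((t-s)^(2*H) / (2*H))
      = ∫ u in s..t, (m/(H-1/2))^2 * (t-u)^(2*H-1) := hlowval.symm
    _ ≤ ∫ u in s..t, (I u)^2 :=
        intervalIntegral.integral_mono_on hst hlowint hI2_intble hpt
    _ = ∫ u in s..t, (∫ v in u..t, (v-u)^(H-3/2) * g v)^2 := by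
        apply intervalIntegral.integral_congr
        intro u hu
        rw [uIcc_of_le hst] at hu
        simp only
        rw [← hI_eq u hu.2]

lemma lhs_chain (H m M hN ts : ℝ) (hq : (0:ℝ) < H - 1/2) (hm : 0 < m) (hmM : m ≤ M)
    (hts : 0 < ts) (hM2 : 0 < M^2) :
    (1 / (H - 1/2))^2 / (2*H) * ts * m^4 / (M^2 + hN^2)
        ≤ (m / (H - 1/2))^2 * (ts / (2*H)) := by
  have hH2 : (0:ℝ) < 2*H := by linarith
  have hnum : (0:ℝ) ≤ (1 / (H - 1/2))^2 / (2*H) * ts * m^4 := by positivity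
  calc (1 / (H - 1/2))^2 / (2*H) * ts * m^4 / (M^2 + hN^2)
      ≤ (1 / (H - 1/2))^2 / (2*H) * ts * m^4 / M^2 :=
        div_le_div_of_nonneg_left hnum hM2 (by nlinarith [sq_nonneg hN])
    _ = (1 / (H - 1/2))^2 / (2*H) * ts * (m^4 / M^2) := by ring
    _ ≤ (1 / (H - 1/2))^2 / (2*H) * ts * m^2 := by
        apply mul_le_mul_of_nonneg_left _ (by positivity)
        rw [div_le_iff₀ hM2]
        nlinarith [mul_self_le_mul_self hm.le hmM, sq_nonneg m, sq_nonneg (m*M)]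
    _ = (m / (H - 1/2))^2 * (ts / (2*H)) := by
        field_simp

end AuxLemmas

/-- For `H ∈ (1/2,1)` and `γ > H - 1/2` there is `C > 0` such that
for every `γ`-Hölder `f : [0,1] → ℝ` and all `0 ≤ s < t ≤ 1`,
`∫ₛᵗ (∫ᵤᵗ (v-u)^{H-3/2} f(v) dv)² du
  ≥ C (t-s)^{2H} (min |f|)⁴ / (‖f‖_∞² + ‖f‖_γ²)`. -/
theorem stmt8 (H γ : ℝ) (hH : 1 / 2 < H) (hH1 : H < 1) (hγ : H - 1 / 2 < γ) :
    ∃ C : ℝ, 0 < C ∧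
      ∀ f : ℝ → ℝ,
        (∃ K : ℝ, ∀ u ∈ Set.Icc (0 : ℝ) 1, ∀ v ∈ Set.Icc (0 : ℝ) 1,
            |f v - f u| ≤ K * |v - u| ^ γ) →
        ∀ s t : ℝ, 0 ≤ s → s < t → t ≤ 1 →
          C * (t - s) ^ (2 * H) * minNorm01 f ^ 4
              / (supNorm01 f ^ 2 + holderNorm01 γ f ^ 2)
            ≤ ∫ u in s..t, (∫ v in u..t, (v - u) ^ (H - 3 / 2) * f v) ^ 2 := by
  have hq : (0:ℝ) < H - 1/2 := by linarith
  have hγ0 : (0:ℝ) < γ := by linarith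
  refine ⟨(1 / (H - 1/2))^2 / (2*H), by positivity, ?_⟩
  rintro f ⟨K, hK⟩ s t hs hst ht
  have hts1 : t - s ≤ 1 := by linarith
  have hts0 : (0:ℝ) < t - s := by linarith
  have hRHS : (0:ℝ) ≤ ∫ u in s..t, (∫ v in u..t, (v-u)^(H-3/2) * f v)^2 :=
    intervalIntegral.integral_nonneg hst.le (fun u _ => sq_nonneg _)
  have hK0 : 0 ≤ K := by
    have h := hK 0 (by norm_num) 1 (by norm_num)
    simp only [sub_zero, abs_one, Real.one_rpow, mul_one] at h
    exact le_trans (abs_nonneg _) h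
  have hSne : ((fun u => ‖f u‖) '' Set.Icc (0:ℝ) 1).Nonempty :=
    ⟨‖f 0‖, ⟨0, by norm_num, rfl⟩⟩
  have hSbdd : BddAbove ((fun u => ‖f u‖) '' Set.Icc (0:ℝ) 1) := by
    refine ⟨|f 0| + K, ?_⟩
    rintro x ⟨u, hu, rfl⟩
    have h1 := hK 0 (by norm_num) u hu
    have h2 : |u - 0| ^ γ ≤ 1 := by
      rw [sub_zero]
      exact Real.rpow_le_one (abs_nonneg u)
        (by rw [abs_of_nonneg hu.1]; exact hu.2) hγ0.le
    have h3 : |f u - f 0| ≤ K := le_trans h1 (by nlinarith)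
    have h4 := abs_sub_abs_le_abs_sub (f u) (f 0)
    simp only [Real.norm_eq_abs]
    linarith
  have hSbb : BddBelow ((fun u => ‖f u‖) '' Set.Icc (0:ℝ) 1) :=
    ⟨0, by rintro x ⟨u, hu, rfl⟩; exact norm_nonneg _⟩
  have hm0 : 0 ≤ minNorm01 f :=
    le_csInf hSne (by rintro x ⟨u, hu, rfl⟩; exact norm_nonneg _)
  rcases hm0.lt_or_eq with hm | hm
  · -- positive minimum
    set m := minNorm01 f with hmdef
    set M := supNorm01 f with hMdef
    have hmle : ∀ u ∈ Set.Icc (0:ℝ) 1, m ≤ |f u| := by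
      intro u hu
      have := csInf_le hSbb ⟨u, hu, rfl⟩
      simpa [Real.norm_eq_abs, hmdef, minNorm01] using this
    have hMge : ∀ u ∈ Set.Icc (0:ℝ) 1, |f u| ≤ M := by
      intro u hu
      have := le_csSup hSbdd ⟨u, hu, rfl⟩
      simpa [Real.norm_eq_abs, hMdef, supNorm01] using this
    have hmM : m ≤ M := le_trans (hmle 0 (by norm_num)) (hMge 0 (by norm_num))
    have hMpos : 0 < M := lt_of_lt_of_le hm hmM
    clear_value m M
    -- clamped function
    set F : ℝ → ℝ := fun x => f (max 0 (min x 1)) with hFdef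
    have hproj_mem : ∀ x : ℝ, max 0 (min x 1) ∈ Set.Icc (0:ℝ) 1 :=
      fun x => ⟨le_max_left _ _, max_le (by norm_num) (min_le_right _ _)⟩
    have hproj_id : ∀ x ∈ Set.Icc (0:ℝ) 1, max 0 (min x 1) = x := by
      intro x hx; rw [min_eq_left hx.2, max_eq_right hx.1]
    have hproj_lip : ∀ x y : ℝ, |max 0 (min y 1) - max 0 (min x 1)| ≤ |y - x| := by
      intro x y
      calc |max 0 (min y 1) - max 0 (min x 1)|
          = |max (min y 1) 0 - max (min x 1) 0| := by rw [max_comm, max_comm (min x 1)]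
        _ ≤ |min y 1 - min x 1| := abs_max_sub_max_le_abs _ _ _
        _ ≤ max |y - x| |(1:ℝ) - 1| := abs_min_sub_min_le_max _ _ _ _
        _ = |y - x| := by simp
    have hFholder : ∀ x y : ℝ, |F y - F x| ≤ K * |y - x| ^ γ := by
      intro x y
      refine le_trans (hK _ (hproj_mem x) _ (hproj_mem y)) ?_
      exact mul_le_mul_of_nonneg_left
        (Real.rpow_le_rpow (abs_nonneg _) (hproj_lip x y) hγ0.le) hK0
    have hFcont : Continuous F := by
      rw [continuous_iff_continuousAt]
      intro x₀
      rw [ContinuousAt, tendsto_iff_dist_tendsto_zero]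
      have h1 : Filter.Tendsto (fun x => |x - x₀|) (nhds x₀) (nhds 0) := by
        have hc : Continuous (fun x : ℝ => |x - x₀|) := by continuity
        have := hc.tendsto x₀
        simpa using this
      have h2 : Filter.Tendsto (fun x => |x - x₀| ^ γ) (nhds x₀) (nhds 0) := by
        have h3 := (Real.continuousAt_rpow_const 0 γ (Or.inr hγ0.le)).tendsto.comp h1
        simpa [Function.comp_def, Real.zero_rpow (ne_of_gt hγ0)] using h3
      have h4 : Filter.Tendsto (fun x => K * |x - x₀| ^ γ) (nhds x₀) (nhds 0) := by
        simpa using h2.const_mul K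
      exact squeeze_zero (fun x => dist_nonneg)
        (fun x => by rw [Real.dist_eq]; exact hFholder x₀ x) h4
    have hFm : ∀ x, m ≤ |F x| := fun x => hmle _ (hproj_mem x)
    have hFM : ∀ x, |F x| ≤ M := fun x => hMge _ (hproj_mem x)
    have hFne : ∀ x, F x ≠ 0 := by
      intro x h
      have := hFm x
      rw [h, abs_zero] at this
      linarith
    -- rewrite RHS with F
    have hint_eq : (∫ u in s..t, (∫ v in u..t, (v-u)^(H-3/2) * f v)^2)
        = ∫ u in s..t, (∫ v in u..t, (v-u)^(H-3/2) * F v)^2 := by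
      apply intervalIntegral.integral_congr
      intro u hu
      rw [uIcc_of_le hst.le] at hu
      simp only
      congr 1
      apply intervalIntegral.integral_congr
      intro v hv
      rw [uIcc_of_le hu.2] at hv
      have hv01 : v ∈ Set.Icc (0:ℝ) 1 :=
        ⟨le_trans (le_trans hs hu.1) hv.1, le_trans hv.2 ht⟩
      simp only [hFdef]
      rw [hproj_id v hv01]
    -- key bound depending on sign
    have hkey : (m / (H - 1/2))^2 * ((t-s)^(2*H) / (2*H)) ≤
        ∫ u in s..t, (∫ v in u..t, (v-u)^(H-3/2) * F v)^2 := by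
      by_cases hsgn : 0 < F 0
      · have hpos : ∀ x, 0 < F x := by
          intro x
          by_contra h
          push_neg at h
          have hx : F x < 0 := lt_of_le_of_ne h (hFne x)
          have h0 : (0:ℝ) ∈ Set.uIcc (F x) (F 0) := by
            rw [Set.mem_uIcc]; left; exact ⟨hx.le, hsgn.le⟩
          obtain ⟨c, _, hc⟩ := intermediate_value_uIcc (hFcont.continuousOn) h0
          exact hFne c hc
        exact key_lemma H hH hH1 F hFcont m M hm
          (fun x => by have := hFm x; rwa [abs_of_pos (hpos x)] at this)
          hFM s t hst.le hts1
      · push_neg at hsgn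
        have hneg : ∀ x, F x < 0 := by
          intro x
          by_contra h
          push_neg at h
          have hx : 0 < F x := lt_of_le_of_ne h (Ne.symm (hFne x))
          have h0 : (0:ℝ) ∈ Set.uIcc (F 0) (F x) := by
            rw [Set.mem_uIcc]; left
            exact ⟨lt_of_le_of_ne hsgn (hFne 0) |>.le, hx.le⟩
          obtain ⟨c, _, hc⟩ := intermediate_value_uIcc (hFcont.continuousOn) h0
          exact hFne c hc
        have hkey' := key_lemma H hH hH1 (fun x => -F x) (hFcont.neg) m M hm
          (fun x => by have := hFm x; rwa [abs_of_neg (hneg x)] at this)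
          (fun x => by rw [abs_neg]; exact hFM x) s t hst.le hts1
        have heq : ∀ u ∈ Set.uIcc s t,
            (∫ v in u..t, (v-u)^(H-3/2) * (-F v))^2
              = (∫ v in u..t, (v-u)^(H-3/2) * F v)^2 := by
          intro u _
          simp only [mul_neg, intervalIntegral.integral_neg, neg_sq]
        calc (m / (H - 1/2))^2 * ((t-s)^(2*H) / (2*H))
            ≤ ∫ u in s..t, (∫ v in u..t, (v-u)^(H-3/2) * (-F v))^2 := hkey'
          _ = ∫ u in s..t, (∫ v in u..t, (v-u)^(H-3/2) * F v)^2 :=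
              intervalIntegral.integral_congr heq
    -- left-hand side chain
    have hts : 0 < (t-s)^(2*H) := Real.rpow_pos_of_pos hts0 _
    have hM2 : 0 < M^2 := by positivity
    have hLHS : (1 / (H - 1/2))^2 / (2*H) * (t-s)^(2*H) * m^4
        / (M^2 + holderNorm01 γ f^2)
        ≤ (m / (H - 1/2))^2 * ((t-s)^(2*H) / (2*H)) := by
      exact lhs_chain H m M (holderNorm01 γ f) ((t-s)^(2*H)) hq hm hmM hts hM2
    calc (1 / (H - 1/2))^2 / (2*H) * (t-s)^(2*H) * m^4
        / (M^2 + holderNorm01 γ f^2)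
        ≤ (m / (H - 1/2))^2 * ((t-s)^(2*H) / (2*H)) := hLHS
      _ ≤ ∫ u in s..t, (∫ v in u..t, (v-u)^(H-3/2) * F v)^2 := hkey
      _ = ∫ u in s..t, (∫ v in u..t, (v-u)^(H-3/2) * f v)^2 := hint_eq.symm
  · rw [← hm]
    simpa using hRHS
end

section
/- Let H ∈ (0, 1/2] and let R(s, t) = ½ ( s^{2H} + t^{2H} − |t − s|^{2H} ) for s, t ∈ [0,1] be the covariance function of fractional Brownian motion with Hurst parameter H. Then for every ρ ≥ 1/(2H), the two-dimensional ρ-variation of R is finite: V_ρ(R) = sup { ( Σ_{i,j} | R(s_{i+1}, t_{j+1}) − R(s_i, t_{j+1}) − R(s_{i+1}, t_j) + R(s_i, t_j) |^ρ )^{1/ρ} : (s_i), (t_j) partitions of [0,1] } < ∞. -/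
open MeasureTheory Set

/-- The covariance function of fractional Brownian motion with Hurst parameter `H`:
`R(s,t) = ½ (s^{2H} + t^{2H} - |t-s|^{2H})`. -/
noncomputable def fbmCov (H s t : ℝ) : ℝ :=
  (s ^ (2 * H) + t ^ (2 * H) - |t - s| ^ (2 * H)) / 2

/-- Monotonicity of a partition sequence. -/
lemma partMono (s : ℕ → ℝ) (m : ℕ) (hs : ∀ i < m, s i < s (i + 1)) :
    ∀ ⦃i j : ℕ⦄, i ≤ j → j ≤ m → s i ≤ s j := by
  intro i j hij hjm
  induction j with
  | zero => simp [Nat.le_zero.1 hij]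
  | succ n ih =>
    rcases eq_or_lt_of_le hij with rfl | h
    · exact le_refl _
    · have hin : i ≤ n := Nat.lt_succ_iff.1 h
      exact (ih hin (by omega)).trans (hs n (by omega)).le

/-- Subadditivity of `x ↦ x^p` for `p ∈ [0,1]`. -/
lemma rpow_sub_le_aux {p a b : ℝ} (hp0 : 0 ≤ p) (hp1 : p ≤ 1) (hb : 0 ≤ b) (hba : b ≤ a) :
    a ^ p ≤ b ^ p + (a - b) ^ p := by
  have ha : 0 ≤ a := hb.trans hba
  have hab : 0 ≤ a - b := by linarith
  have key := NNReal.rpow_add_le_add_rpow (Real.toNNReal b) (Real.toNNReal (a - b)) hp0 hp1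
  have e : Real.toNNReal b + Real.toNNReal (a - b) = Real.toNNReal a := by
    rw [← Real.toNNReal_add hb hab]
    norm_num
  rw [e] at key
  have key2 := NNReal.coe_le_coe.2 key
  rw [NNReal.coe_add, NNReal.coe_rpow, NNReal.coe_rpow, NNReal.coe_rpow,
    Real.coe_toNNReal a ha, Real.coe_toNNReal b hb, Real.coe_toNNReal _ hab] at key2
  exact key2

/-- `p`-Hölder property of `x ↦ x^p` for `p ∈ [0,1]`. -/
lemma abs_rpow_sub_rpow_le {p a b : ℝ} (hp0 : 0 ≤ p) (hp1 : p ≤ 1) (ha : 0 ≤ a) (hb : 0 ≤ b) :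
    |a ^ p - b ^ p| ≤ |a - b| ^ p := by
  have main : ∀ u v : ℝ, 0 ≤ v → v ≤ u → |u ^ p - v ^ p| ≤ |u - v| ^ p := by
    intro u v hv hvu
    rw [abs_of_nonneg (by linarith : (0:ℝ) ≤ u - v)]
    have h1 : u ^ p ≤ v ^ p + (u - v) ^ p := rpow_sub_le_aux hp0 hp1 hv hvu
    have h2 : v ^ p ≤ u ^ p := Real.rpow_le_rpow hv hvu hp0
    have h3 : (0:ℝ) ≤ (u - v) ^ p := Real.rpow_nonneg (by linarith) p
    rw [abs_of_nonneg (by linarith : (0:ℝ) ≤ u ^ p - v ^ p)]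
    linarith
  rcases le_total b a with h | h
  · exact main a b hb h
  · rw [abs_sub_comm, abs_sub_comm a b]; exact main b a ha h

/-- Concavity inequality: for `0 ≤ a ≤ b ≤ d` and `p ∈ [0,1]`,
`a^p + d^p ≤ b^p + (a+d-b)^p`. -/
lemma concave_rpow_ineq {p : ℝ} (hp0 : 0 ≤ p) (hp1 : p ≤ 1) {a b d : ℝ} (ha : 0 ≤ a)
    (hab : a ≤ b) (hbd : b ≤ d) : a ^ p + d ^ p ≤ b ^ p + (a + d - b) ^ p := by
  rcases eq_or_lt_of_le (hab.trans hbd) with heq | had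
  · have hba : b = a := le_antisymm (heq ▸ hbd) hab
    rw [hba, show a + d - a = d by ring]
  · have hda : 0 < d - a := by linarith
    set lam := (d - b) / (d - a) with hlamdef
    set mu := (b - a) / (d - a) with hmudef
    have hlam : 0 ≤ lam := div_nonneg (by linarith) hda.le
    have hmu : 0 ≤ mu := div_nonneg (by linarith) hda.le
    have hsum : lam + mu = 1 := by
      rw [hlamdef, hmudef, ← add_div, div_eq_one_iff_eq hda.ne']
      ring
    have hd' : (0:ℝ) ≤ d := ha.trans (hab.trans hbd)
    have hc := Real.concaveOn_rpow hp0 hp1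
    have h1 := hc.2 (mem_Ici.2 ha) (mem_Ici.2 hd') hlam hmu hsum
    have h2 := hc.2 (mem_Ici.2 ha) (mem_Ici.2 hd') hmu hlam (by linarith)
    simp only [smul_eq_mul] at h1 h2
    have e1 : lam * a + mu * d = b := by
      rw [hlamdef, hmudef]; field_simp; ring
    have e2 : mu * a + lam * d = a + d - b := by
      rw [hlamdef, hmudef]; field_simp; ring
    rw [e1] at h1
    rw [e2] at h2
    have e3 : lam * a ^ p + mu * d ^ p + (mu * a ^ p + lam * d ^ p) = a ^ p + d ^ p := by
      linear_combination (a ^ p + d ^ p) * hsum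
    linarith

/-- Variation bound for antitone functions. -/
lemma AntitoneOn.eVariationOn_le' {f : ℝ → ℝ} {s : Set ℝ} (hf : AntitoneOn f s) {a b : ℝ}
    (as : a ∈ s) (bs : b ∈ s) : eVariationOn f (s ∩ Icc a b) ≤ ENNReal.ofReal (f a - f b) := by
  have hneg : MonotoneOn (fun u => -f u) s := fun u hu v hv huv => neg_le_neg (hf hu hv huv)
  have key := hneg.eVariationOn_le as bs
  have heq : eVariationOn (fun u => -f u) (s ∩ Icc a b) = eVariationOn f (s ∩ Icc a b) := by
    simp only [eVariationOn, edist_neg_neg]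
  rw [heq] at key
  refine key.trans (le_of_eq ?_)
  congr 1
  ring

/-- `Σ aⱼ^ρ ≤ (Σ aⱼ)^ρ` for nonnegative `aⱼ` and `ρ ≥ 1`. -/
lemma sum_rpow_le_rpow_sum {ι : Type*} (s : Finset ι) (f : ι → ℝ) (hf : ∀ j ∈ s, 0 ≤ f j)
    {ρ : ℝ} (hρ : 1 ≤ ρ) : ∑ j ∈ s, f j ^ ρ ≤ (∑ j ∈ s, f j) ^ ρ := by
  set S := ∑ j ∈ s, f j with hS
  have hS0 : 0 ≤ S := Finset.sum_nonneg hf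
  rcases eq_or_lt_of_le hS0 with h0 | h0
  · have hall : ∀ j ∈ s, f j = 0 := (Finset.sum_eq_zero_iff_of_nonneg hf).1 h0.symm
    have : ∑ j ∈ s, f j ^ ρ = 0 := by
      refine Finset.sum_eq_zero fun j hj => ?_
      rw [hall j hj, Real.zero_rpow (by linarith : ρ ≠ 0)]
    rw [this, ← h0, Real.zero_rpow (by linarith : ρ ≠ 0)]
  · have key : ∀ j ∈ s, f j ^ ρ ≤ f j * S ^ (ρ - 1) := by
      intro j hj
      rcases eq_or_lt_of_le (hf j hj) with hj0 | hj0
      · rw [← hj0, Real.zero_rpow (by linarith : ρ ≠ 0), zero_mul]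
      · have e : f j ^ ρ = f j * f j ^ (ρ - 1) := by
          rw [show ρ = 1 + (ρ - 1) by ring, Real.rpow_add hj0, Real.rpow_one]
          ring_nf
        rw [e]
        have hle : f j ≤ S := Finset.single_le_sum hf hj
        exact mul_le_mul_of_nonneg_left
          (Real.rpow_le_rpow hj0.le hle (by linarith)) hj0.le
    calc ∑ j ∈ s, f j ^ ρ ≤ ∑ j ∈ s, f j * S ^ (ρ - 1) := Finset.sum_le_sum key
      _ = S * S ^ (ρ - 1) := by rw [← Finset.sum_mul]
      _ = S ^ ρ := by
          rw [Real.rpow_sub h0, Real.rpow_one]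
          field_simp

/-- For `H ∈ (0, 1/2]` and `ρ ≥ 1/(2H)`, the two-dimensional
`ρ`-variation of the fBm covariance `R` on `[0,1]²` is finite: there is a constant `C`
bounding, over all pairs of partitions `(s_i)_{i ≤ m}`, `(t_j)_{j ≤ l}` of `[0,1]`, the
sums `Σ_{i,j} |R(s_{i+1},t_{j+1}) - R(s_i,t_{j+1}) - R(s_{i+1},t_j) + R(s_i,t_j)|^ρ`. -/
theorem stmt14 (H ρ : ℝ) (hH0 : 0 < H) (hH : H ≤ 1 / 2) (hρ : 1 / (2 * H) ≤ ρ) :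
    ∃ C : ℝ, ∀ (m l : ℕ) (s t : ℕ → ℝ),
      s 0 = 0 → s m = 1 → (∀ i < m, s i < s (i + 1)) →
      t 0 = 0 → t l = 1 → (∀ j < l, t j < t (j + 1)) →
      (∑ i ∈ Finset.range m, ∑ j ∈ Finset.range l,
          |fbmCov H (s (i + 1)) (t (j + 1)) - fbmCov H (s i) (t (j + 1))
            - fbmCov H (s (i + 1)) (t j) + fbmCov H (s i) (t j)| ^ ρ)
        ≤ C := by
  have hp0 : 0 < 2 * H := by linarith
  have hp1 : 2 * H ≤ 1 := by linarith
  have hρ1 : 1 ≤ ρ := by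
    have : 1 ≤ 1 / (2 * H) := by rw [le_div_iff₀ hp0]; linarith
    linarith
  have hρ0 : 0 ≤ ρ := by linarith
  have hpρ : 1 ≤ 2 * H * ρ := by
    have := mul_le_mul_of_nonneg_left hρ hp0.le
    rwa [mul_one_div, div_self hp0.ne'] at this
  refine ⟨(3:ℝ) ^ ρ, ?_⟩
  intro m l s t hs0 hsm hs ht0 htl ht
  have smono := partMono s m hs
  have tmono := partMono t l ht
  have inner : ∀ i ∈ Finset.range m,
      (∑ j ∈ Finset.range l,
          |fbmCov H (s (i + 1)) (t (j + 1)) - fbmCov H (s i) (t (j + 1))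
            - fbmCov H (s (i + 1)) (t j) + fbmCov H (s i) (t j)| ^ ρ)
        ≤ (3:ℝ) ^ ρ * (s (i + 1) - s i) := by
    intro i hi
    have him : i < m := Finset.mem_range.1 hi
    set x := s i with hxdef
    set y := s (i + 1) with hydef
    have hxy : x ≤ y := (hs i him).le
    have hx0 : 0 ≤ x := by rw [← hs0]; exact smono (Nat.zero_le i) him.le
    have hy1 : y ≤ 1 := by rw [← hsm]; exact smono him le_rfl
    have hy0 : 0 ≤ y := hx0.trans hxy
    have hx1 : x ≤ 1 := hxy.trans hy1
    have hd0 : 0 ≤ y - x := by linarith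
    have hdp0 : 0 ≤ (y - x) ^ (2 * H) := Real.rpow_nonneg hd0 _
    set g : ℝ → ℝ := fun u => |u - x| ^ (2 * H) - |u - y| ^ (2 * H) with hg
    -- oscillation bound
    have gosc : ∀ u : ℝ, |g u| ≤ (y - x) ^ (2 * H) := by
      intro u
      have h1 : |g u| ≤ |(|u - x| - |u - y|)| ^ (2 * H) := by
        simpa [hg] using
          abs_rpow_sub_rpow_le (p := 2 * H) hp0.le hp1 (abs_nonneg (u - x)) (abs_nonneg (u - y))
      refine h1.trans (Real.rpow_le_rpow (abs_nonneg _) ?_ hp0.le)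
      have h2 := abs_abs_sub_abs_le_abs_sub (u - x) (u - y)
      rw [show u - x - (u - y) = y - x by ring, abs_of_nonneg hd0] at h2
      exact h2
    -- monotonicity pieces
    have hA : AntitoneOn g (Icc (0:ℝ) x) := by
      intro t1 ht1 t2 ht2 h12
      simp only [hg]
      rw [abs_of_nonpos (by linarith [ht2.2] : t2 - x ≤ 0), neg_sub,
          abs_of_nonpos (by linarith [ht2.2] : t2 - y ≤ 0), neg_sub,
          abs_of_nonpos (by linarith [ht1.2] : t1 - x ≤ 0), neg_sub,
          abs_of_nonpos (by linarith [ht1.2] : t1 - y ≤ 0), neg_sub]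
      have key := concave_rpow_ineq (p := 2 * H) hp0.le hp1 (a := x - t2) (b := x - t1)
        (d := y - t1) (by linarith [ht2.2]) (by linarith) (by linarith)
      rw [show x - t2 + (y - t1) - (x - t1) = y - t2 by ring] at key
      linarith
    have hB : MonotoneOn g (Icc x y) := by
      intro t1 ht1 t2 ht2 h12
      simp only [hg]
      rw [abs_of_nonneg (by linarith [ht1.1] : (0:ℝ) ≤ t1 - x),
          abs_of_nonpos (by linarith [ht1.2] : t1 - y ≤ 0), neg_sub,
          abs_of_nonneg (by linarith [ht2.1] : (0:ℝ) ≤ t2 - x),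
          abs_of_nonpos (by linarith [ht2.2] : t2 - y ≤ 0), neg_sub]
      have k1 : (t1 - x) ^ (2 * H) ≤ (t2 - x) ^ (2 * H) :=
        Real.rpow_le_rpow (by linarith [ht1.1]) (by linarith) hp0.le
      have k2 : (y - t2) ^ (2 * H) ≤ (y - t1) ^ (2 * H) :=
        Real.rpow_le_rpow (by linarith [ht2.2]) (by linarith) hp0.le
      linarith
    have hC : AntitoneOn g (Icc y 1) := by
      intro t1 ht1 t2 ht2 h12
      simp only [hg]
      rw [abs_of_nonneg (by linarith [ht2.1] : (0:ℝ) ≤ t2 - x),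
          abs_of_nonneg (by linarith [ht2.1] : (0:ℝ) ≤ t2 - y),
          abs_of_nonneg (by linarith [ht1.1] : (0:ℝ) ≤ t1 - x),
          abs_of_nonneg (by linarith [ht1.1] : (0:ℝ) ≤ t1 - y)]
      have key := concave_rpow_ineq (p := 2 * H) hp0.le hp1 (a := t1 - y) (b := t2 - y)
        (d := t2 - x) (by linarith [ht1.1]) (by linarith) (by linarith)
      rw [show t1 - y + (t2 - x) - (t2 - y) = t1 - x by ring] at key
      linarith
    -- variation bound
    have hV : eVariationOn g (Icc (0:ℝ) 1) ≤ ENNReal.ofReal (6 * (y - x) ^ (2 * H)) := by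
      have e1 : Icc (0:ℝ) 1 ∩ Icc 0 x = Icc 0 x :=
        inter_eq_self_of_subset_right (Icc_subset_Icc le_rfl hx1)
      have e2 : Icc (0:ℝ) 1 ∩ Icc x 1 = Icc x 1 :=
        inter_eq_self_of_subset_right (Icc_subset_Icc hx0 le_rfl)
      have e3 : Icc (0:ℝ) 1 ∩ Icc x y = Icc x y :=
        inter_eq_self_of_subset_right (Icc_subset_Icc hx0 hy1)
      have e4 : Icc (0:ℝ) 1 ∩ Icc y 1 = Icc y 1 :=
        inter_eq_self_of_subset_right (Icc_subset_Icc hy0 le_rfl)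
      have s1 := eVariationOn.Icc_add_Icc (s := Icc (0:ℝ) 1) (a := (0:ℝ)) (b := x) (c := 1)
        g hx0 hx1 (Set.mem_Icc.2 ⟨hx0, hx1⟩)
      have s2 := eVariationOn.Icc_add_Icc (s := Icc (0:ℝ) 1) (a := x) (b := y) (c := 1)
        g hxy hy1 (Set.mem_Icc.2 ⟨hy0, hy1⟩)
      rw [e1, e2, inter_self] at s1
      rw [e3, e4, e2] at s2
      have b1 : eVariationOn g (Icc 0 x) ≤ ENNReal.ofReal (2 * (y - x) ^ (2 * H)) := by
        have := hA.eVariationOn_le' (Set.mem_Icc.2 ⟨le_rfl, hx0⟩)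
          (Set.mem_Icc.2 ⟨hx0, le_rfl⟩)
        rw [inter_self] at this
        refine this.trans (ENNReal.ofReal_le_ofReal ?_)
        have o1 := abs_le.1 (gosc 0)
        have o2 := abs_le.1 (gosc x)
        linarith [o1.1, o1.2, o2.1, o2.2]
      have b2 : eVariationOn g (Icc x y) ≤ ENNReal.ofReal (2 * (y - x) ^ (2 * H)) := by
        have := hB.eVariationOn_le (Set.mem_Icc.2 ⟨le_rfl, hxy⟩) (Set.mem_Icc.2 ⟨hxy, le_rfl⟩)
        rw [inter_self] at this
        refine this.trans (ENNReal.ofReal_le_ofReal ?_)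
        have o1 := abs_le.1 (gosc x)
        have o2 := abs_le.1 (gosc y)
        linarith [o1.1, o1.2, o2.1, o2.2]
      have b3 : eVariationOn g (Icc y 1) ≤ ENNReal.ofReal (2 * (y - x) ^ (2 * H)) := by
        have := hC.eVariationOn_le' (Set.mem_Icc.2 ⟨le_rfl, hy1⟩) (Set.mem_Icc.2 ⟨hy1, le_rfl⟩)
        rw [inter_self] at this
        refine this.trans (ENNReal.ofReal_le_ofReal ?_)
        have o1 := abs_le.1 (gosc y)
        have o2 := abs_le.1 (gosc 1)
        linarith [o1.1, o1.2, o2.1, o2.2]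
      calc eVariationOn g (Icc (0:ℝ) 1)
          = eVariationOn g (Icc 0 x) + (eVariationOn g (Icc x y) + eVariationOn g (Icc y 1)) := by
            rw [s2, s1]
        _ ≤ ENNReal.ofReal (2 * (y - x) ^ (2 * H)) +
              (ENNReal.ofReal (2 * (y - x) ^ (2 * H)) + ENNReal.ofReal (2 * (y - x) ^ (2 * H))) :=
            add_le_add b1 (add_le_add b2 b3)
        _ = ENNReal.ofReal (6 * (y - x) ^ (2 * H)) := by
            rw [← ENNReal.ofReal_add (by linarith) (by linarith),
              ← ENNReal.ofReal_add (by linarith) (by linarith)]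
            congr 1
            ring
    -- sum over partition of [0,1] in t
    have hsum_g : (∑ j ∈ Finset.range l, |g (t (j + 1)) - g (t j)|) ≤ 6 * (y - x) ^ (2 * H) := by
      set u : ℕ → ℝ := fun j => t (min j l) with hu
      have humono : Monotone u := by
        intro j k hjk
        exact tmono (min_le_min_right l hjk) (min_le_right _ _)
      have humem : ∀ j, u j ∈ Icc (0:ℝ) 1 := by
        intro j
        constructor
        · rw [← ht0]; exact tmono (Nat.zero_le _) (min_le_right _ _)
        · rw [← htl]; exact tmono (min_le_right _ _) le_rfl
      have key := eVariationOn.sum_le (f := g) (n := l) humono humem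
      have key2 : ENNReal.ofReal (∑ j ∈ Finset.range l, |g (t (j + 1)) - g (t j)|)
          ≤ ENNReal.ofReal (6 * (y - x) ^ (2 * H)) := by
        rw [ENNReal.ofReal_sum_of_nonneg (fun j _ => abs_nonneg _)]
        refine le_trans (le_of_eq ?_) (key.trans hV)
        refine Finset.sum_congr rfl fun j hj => ?_
        have hjl := Finset.mem_range.1 hj
        have eu1 : u (j + 1) = t (j + 1) := by
          simp only [hu]; rw [Nat.min_eq_left (Nat.succ_le_of_lt hjl)]
        have eu2 : u j = t j := by
          simp only [hu]; rw [Nat.min_eq_left hjl.le]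
        rw [eu1, eu2, edist_dist, Real.dist_eq]
      exact (ENNReal.ofReal_le_ofReal_iff (by linarith)).1 key2
    -- identify rectangular increments with increments of g
    have hΔ : ∀ a b : ℝ, fbmCov H y b - fbmCov H x b - fbmCov H y a + fbmCov H x a
        = (g b - g a) / 2 := by
      intro a b
      simp only [hg]
      unfold fbmCov
      ring
    have habs : ∀ j : ℕ,
        |fbmCov H y (t (j + 1)) - fbmCov H x (t (j + 1)) - fbmCov H y (t j) + fbmCov H x (t j)|
          = |g (t (j + 1)) - g (t j)| / 2 := by
      intro j
      rw [hΔ, abs_div, abs_two]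
    have hsumΔ : (∑ j ∈ Finset.range l,
        |fbmCov H y (t (j + 1)) - fbmCov H x (t (j + 1)) - fbmCov H y (t j) + fbmCov H x (t j)|)
          ≤ 3 * (y - x) ^ (2 * H) := by
      calc (∑ j ∈ Finset.range l,
          |fbmCov H y (t (j + 1)) - fbmCov H x (t (j + 1)) - fbmCov H y (t j) + fbmCov H x (t j)|)
          = (∑ j ∈ Finset.range l, |g (t (j + 1)) - g (t j)|) / 2 := by
            rw [Finset.sum_div]
            exact Finset.sum_congr rfl fun j _ => habs j
        _ ≤ 6 * (y - x) ^ (2 * H) / 2 := by linarith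
        _ = 3 * (y - x) ^ (2 * H) := by ring
    -- finish the inner bound
    have hd1 : y - x ≤ 1 := by linarith
    have shrink : (y - x) ^ (2 * H * ρ) ≤ y - x := by
      rcases eq_or_lt_of_le hd0 with h0 | h0
      · rw [← h0, Real.zero_rpow (by positivity : 2 * H * ρ ≠ 0)]
      · calc (y - x) ^ (2 * H * ρ) ≤ (y - x) ^ (1:ℝ) :=
            Real.rpow_le_rpow_of_exponent_ge h0 hd1 hpρ
          _ = y - x := Real.rpow_one _
    calc (∑ j ∈ Finset.range l,
        |fbmCov H y (t (j + 1)) - fbmCov H x (t (j + 1)) - fbmCov H y (t j) + fbmCov H x (t j)| ^ ρ)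
        ≤ (∑ j ∈ Finset.range l,
            |fbmCov H y (t (j + 1)) - fbmCov H x (t (j + 1)) - fbmCov H y (t j)
              + fbmCov H x (t j)|) ^ ρ :=
          sum_rpow_le_rpow_sum _ _ (fun j _ => abs_nonneg _) hρ1
      _ ≤ (3 * (y - x) ^ (2 * H)) ^ ρ :=
          Real.rpow_le_rpow (Finset.sum_nonneg fun j _ => abs_nonneg _) hsumΔ hρ0
      _ = (3:ℝ) ^ ρ * ((y - x) ^ (2 * H)) ^ ρ := Real.mul_rpow (by norm_num) hdp0
      _ = (3:ℝ) ^ ρ * (y - x) ^ (2 * H * ρ) := by rw [← Real.rpow_mul hd0]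
      _ ≤ (3:ℝ) ^ ρ * (y - x) :=
          mul_le_mul_of_nonneg_left shrink (Real.rpow_nonneg (by norm_num) ρ)
  calc (∑ i ∈ Finset.range m, ∑ j ∈ Finset.range l,
          |fbmCov H (s (i + 1)) (t (j + 1)) - fbmCov H (s i) (t (j + 1))
            - fbmCov H (s (i + 1)) (t j) + fbmCov H (s i) (t j)| ^ ρ)
      ≤ ∑ i ∈ Finset.range m, (3:ℝ) ^ ρ * (s (i + 1) - s i) := Finset.sum_le_sum inner
    _ = (3:ℝ) ^ ρ * ∑ i ∈ Finset.range m, (s (i + 1) - s i) := by rw [Finset.mul_sum]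
    _ = (3:ℝ) ^ ρ * (s m - s 0) := by rw [Finset.sum_range_sub]
    _ = (3:ℝ) ^ ρ := by rw [hsm, hs0]; ring
end
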